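/- arXiv:1211.6555 — 5 statements merged into one kernel-verified Lean document; each statement's English description precedes it below -/
import Mathlib

section
/- Let H be the connected graph that is the union of the complete graph K_m on vertices v_{α_1},…,v_{α_m} (1 ≤ α_1 < α_2 < … < α_m = n, m < n) and a single star graph whose center is v_{α_i} for some i with 2 ≤ i ≤ m, and whose leaves are the vertices v_{α_{i−1}+1},…,v_{α_i−1} (the n − m vertices outside K_m). Then the ideal of vertex covers I_c(H) has exactly m minimal monomial squarefree generators, namely: for each j ≠ i, the monomial ∏_{l≠j} X_{α_l} (the product over all K_m-vertices except v_{α_j}), together with the monomial (∏_{l≠i} X_{α_l})·X_{α_{i−1}+1}⋯X_{α_i−1} (the product over all K_m-vertices except the center, multiplied by all leaves of the star). -/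
open MvPolynomial Finset

section CoverAux

variable {K : Type*} [Field K] {n : ℕ}

noncomputable def indC {n : ℕ} (C : Finset (Fin n)) : Fin n →₀ ℕ := ∑ i ∈ C, Finsupp.single i 1

lemma indC_apply (C : Finset (Fin n)) (x : Fin n) : indC C x = if x ∈ C then 1 else 0 := by
  classical
  rw [indC, Finset.sum_apply']
  simp [Finsupp.single_apply]

lemma support_indC (C : Finset (Fin n)) : (indC C).support = C := by
  ext x
  rw [Finsupp.mem_support_iff, indC_apply]
  split_ifs with h <;> simp [h]

lemma indC_le_iff (C : Finset (Fin n)) (a : Fin n →₀ ℕ) :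
    indC C ≤ a ↔ C ⊆ a.support := by
  rw [Finsupp.le_def]
  constructor
  · intro h x hx
    have := h x
    rw [indC_apply, if_pos hx] at this
    exact Finsupp.mem_support_iff.2 (by omega)
  · intro h x
    rw [indC_apply]
    split_ifs with hx
    · exact Nat.one_le_iff_ne_zero.2 (Finsupp.mem_support_iff.1 (h hx))
    · exact Nat.zero_le _

lemma eq_indC_support_of_le (C : Finset (Fin n)) (b : Fin n →₀ ℕ) (hb : b ≤ indC C) :
    b = indC b.support := by
  ext x
  have h1 := Finsupp.le_def.1 hb x
  rw [indC_apply] at h1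
  rw [indC_apply]
  by_cases hx : x ∈ b.support
  · rw [if_pos hx]
    have := Finsupp.mem_support_iff.1 hx
    split_ifs at h1 <;> omega
  · rw [if_neg hx]
    exact Finsupp.notMem_support_iff.1 hx

lemma prod_X_eq_monomial (C : Finset (Fin n)) :
    (∏ i ∈ C, X i : MvPolynomial (Fin n) K) = monomial (indC C) 1 := by
  classical
  induction C using Finset.induction_on with
  | empty => simp [indC]
  | @insert a s h ih =>
    rw [Finset.prod_insert h, ih, ← pow_one (X a : MvPolynomial (Fin n) K),
      X_pow_eq_monomial, monomial_mul, one_mul, indC, indC, Finset.sum_insert h]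

lemma prod_X_injC (C D : Finset (Fin n))
    (h : (∏ i ∈ C, X i : MvPolynomial (Fin n) K) = ∏ i ∈ D, X i) : C = D := by
  rw [prod_X_eq_monomial, prod_X_eq_monomial] at h
  have := monomial_left_injective (one_ne_zero : (1 : K) ≠ 0) h
  rw [← support_indC C, ← support_indC D, this]

end CoverAux

/-- A set of vertices is a vertex cover if it meets every edge. -/
def IsVertexCover {V : Type*} (G : SimpleGraph V) (C : Set V) : Prop :=
  ∀ ⦃u v : V⦄, G.Adj u v → u ∈ C ∨ v ∈ C

/-- The ideal of vertex covers of a graph on `Fin n`. -/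
noncomputable def coverIdeal (K : Type*) [Field K] {n : ℕ} (G : SimpleGraph (Fin n)) :
    Ideal (MvPolynomial (Fin n) K) :=
  Ideal.span { p | ∃ C : Finset (Fin n), IsVertexCover G ↑C ∧ p = ∏ i ∈ C, X i }

/-- The edge ideal of a graph on `Fin n`. -/
noncomputable def edgeIdeal (K : Type*) [Field K] {n : ℕ} (G : SimpleGraph (Fin n)) :
    Ideal (MvPolynomial (Fin n) K) :=
  Ideal.span { p | ∃ u v : Fin n, G.Adj u v ∧ p = X u * X v }

/-- `p` is a minimal monomial generator of the monomial ideal `I`: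
it is a monomial in `I` none of whose proper monomial divisors lies in `I`. -/
def IsMinimalMonomialGen {K : Type*} [Field K] {n : ℕ}
    (I : Ideal (MvPolynomial (Fin n) K)) (p : MvPolynomial (Fin n) K) : Prop :=
  ∃ a : Fin n →₀ ℕ, p = monomial a (1 : K) ∧ p ∈ I ∧
    ∀ b : Fin n →₀ ℕ, b ≤ a → b ≠ a → monomial b (1 : K) ∉ I

/-- The maximal graded ideal (X_1, …, X_n) of the polynomial ring. -/
noncomputable def gradedMaxIdeal (K : Type*) [Field K] (n : ℕ) :
    Ideal (MvPolynomial (Fin n) K) :=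
  Ideal.span (Set.range X)

/-- The set of lengths of regular sequences on `R/I` consisting of elements of the
maximal graded ideal; its greatest element is the depth of `R/I`. -/
def depthSet (K : Type*) [Field K] {n : ℕ} (I : Ideal (MvPolynomial (Fin n) K)) : Set ℕ :=
  {k | ∃ rs : List (MvPolynomial (Fin n) K), rs.length = k ∧
    (∀ r ∈ rs, r ∈ gradedMaxIdeal K n) ∧
    RingTheory.Sequence.IsRegular (MvPolynomial (Fin n) K ⧸ I) rs}

/-- A minimal graded free resolution of `R/I`:
`⋯ → F₂ → F₁ → F₀ = R → R/I → 0`, where `F_{j+1}` is free of rank `rk j` with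
generator degrees `dgr j`, the map `F₁ → R` is given by the row `g` (whose image is `I`),
and the map `F_{j+2} → F_{j+1}` is given by the matrix `M j`.  All matrix entries are
homogeneous of the appropriate degree and lie in the maximal graded ideal (minimality),
and the complex is exact at every `F_{j}`, `j ≥ 1`. -/
def IsMinimalGradedFreeResolution {K : Type*} [Field K] {n : ℕ}
    (I : Ideal (MvPolynomial (Fin n) K))
    (rk : ℕ → ℕ) (dgr : ∀ j : ℕ, Fin (rk j) → ℕ)
    (g : Fin (rk 0) → MvPolynomial (Fin n) K)
    (M : ∀ j : ℕ, Matrix (Fin (rk j)) (Fin (rk (j + 1))) (MvPolynomial (Fin n) K)) : Prop :=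
  Ideal.span (Set.range g) = I ∧
  (∀ i, (g i).IsHomogeneous (dgr 0 i)) ∧
  (∀ i, constantCoeff (g i) = 0) ∧
  (∀ (j : ℕ) (k : Fin (rk j)) (i : Fin (rk (j + 1))),
      (M j k i).IsHomogeneous (dgr (j + 1) i - dgr j k)) ∧
  (∀ (j : ℕ) (k : Fin (rk j)) (i : Fin (rk (j + 1))),
      dgr (j + 1) i ≤ dgr j k → M j k i = 0) ∧
  LinearMap.ker (Fintype.linearCombination (MvPolynomial (Fin n) K) g)
    = LinearMap.range (M 0).mulVecLin ∧
  (∀ j : ℕ, LinearMap.ker (M j).mulVecLin = LinearMap.range (M (j + 1)).mulVecLin)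

attribute [local instance] Classical.propDecidable

/-- `H` is the union of the complete graph on the vertices `α 0 < α 1 < … < α (m-1)`
(with `α (m-1) = n-1` and `m < n`) and a single star with center `α i₀` (`i₀ ≥ 1`) whose
leaves are the vertices strictly between `α (i₀ - 1)` and `α i₀` — these being exactly the
`n - m` vertices outside the complete graph.  Then `I_c(H)` has exactly `m` minimal
monomial squarefree generators, namely, for each `j ≠ i₀`, the monomial
`∏_{l ≠ j} X (α l)`, together with `(∏_{l ≠ i₀} X (α l)) * ∏_{α (i₀-1) < w < α i₀} X w`. -/
theorem coverIdeal_gens_one_star_mid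
    (n m : ℕ) (hm : 0 < m) (hmn : m < n) (K : Type*) [Field K]
    (α : Fin m → Fin n) (hα : StrictMono α)
    (hlast : (α ⟨m - 1, by omega⟩ : ℕ) = n - 1)
    (i₀ : Fin m) (hi₀ : 0 < (i₀ : ℕ))
    (houtside : ∀ v : Fin n, v ∉ Set.range α ↔
      (α ⟨(i₀ : ℕ) - 1, lt_of_le_of_lt (Nat.sub_le _ _) i₀.isLt⟩ < v ∧ v < α i₀))
    (H : SimpleGraph (Fin n))
    (hH : ∀ u v : Fin n, H.Adj u v ↔
      (∃ i j : Fin m, i ≠ j ∧ u = α i ∧ v = α j) ∨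
      (u = α i₀ ∧ α ⟨(i₀ : ℕ) - 1, lt_of_le_of_lt (Nat.sub_le _ _) i₀.isLt⟩ < v ∧ v < α i₀) ∨
      (v = α i₀ ∧ α ⟨(i₀ : ℕ) - 1, lt_of_le_of_lt (Nat.sub_le _ _) i₀.isLt⟩ < u ∧ u < α i₀)) :
    ∃ S : Finset (MvPolynomial (Fin n) K),
      S = insert
          ((∏ l ∈ Finset.univ.erase i₀, X (α l)) *
            ∏ w ∈ Finset.Ioo (α ⟨(i₀ : ℕ) - 1, lt_of_le_of_lt (Nat.sub_le _ _) i₀.isLt⟩) (α i₀),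
              X w)
          ((Finset.univ.erase i₀).image
            fun j : Fin m => ∏ l ∈ Finset.univ.erase j, X (α l)) ∧
      {p | IsMinimalMonomialGen (coverIdeal K H) p} = ↑S ∧
      S.card = m := by
    classical
    have hαinj : Function.Injective α := hα.injective
    set i₁ : Fin m := ⟨(i₀ : ℕ) - 1, lt_of_le_of_lt (Nat.sub_le _ _) i₀.isLt⟩ with hi₁
    set A : Finset (Fin n) := Finset.univ.image α with hA
    set Lv : Finset (Fin n) := Finset.Ioo (α i₁) (α i₀) with hLv
    have hmemA : ∀ x : Fin n, x ∈ A ↔ x ∈ Set.range α := by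
      intro x; simp [hA, Set.mem_range, eq_comm]
    have hLvA : ∀ x : Fin n, x ∈ Lv ↔ x ∉ A := by
      intro x; rw [hmemA, houtside x, hLv, Finset.mem_Ioo]
    -- membership in the cover ideal
    have hspan : coverIdeal K H =
        Ideal.span ((fun s => monomial s (1 : K)) ''
          {s | ∃ C : Finset (Fin n), IsVertexCover H ↑C ∧ s = indC C}) := by
      unfold coverIdeal
      congr 1
      ext p
      constructor
      · rintro ⟨C, hC, rfl⟩
        exact ⟨indC C, ⟨C, hC, rfl⟩, (prod_X_eq_monomial C).symm⟩
      · rintro ⟨s, ⟨C, hC, rfl⟩, rfl⟩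
        exact ⟨C, hC, (prod_X_eq_monomial C).symm⟩
    have hmem : ∀ a : Fin n →₀ ℕ,
        monomial a (1 : K) ∈ coverIdeal K H ↔ IsVertexCover H ↑a.support := by
      intro a
      rw [hspan, mem_ideal_span_monomial_image]
      simp only [support_monomial, if_neg (one_ne_zero : (1 : K) ≠ 0), Finset.mem_singleton]
      constructor
      · intro h
        obtain ⟨si, ⟨C, hC, rfl⟩, hle⟩ := h a rfl
        have hsub : C ⊆ a.support := (indC_le_iff _ _).1 hle
        intro u v huv
        rcases hC huv with h | h
        · exact Or.inl (hsub h)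
        · exact Or.inr (hsub h)
      · intro h xi hxi
        subst hxi
        exact ⟨indC xi.support, ⟨xi.support, h, rfl⟩, (indC_le_iff _ _).2 (subset_refl _)⟩
    -- minimal monomial generators are minimal vertex covers
    have hgen : ∀ p : MvPolynomial (Fin n) K, IsMinimalMonomialGen (coverIdeal K H) p ↔
        ∃ C : Finset (Fin n), (IsVertexCover H ↑C ∧ ∀ D ⊂ C, ¬IsVertexCover H ↑D) ∧
          p = ∏ i ∈ C, X i := by
      intro p
      constructor
      · rintro ⟨a, rfl, hmemI, hmin⟩
        have hcov : IsVertexCover H ↑a.support := (hmem a).1 hmemI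
        have ha : a = indC a.support := by
          by_contra hne
          exact hmin (indC a.support) ((indC_le_iff _ _).2 (subset_refl _))
            (fun h => hne h.symm)
            ((hmem _).2 (by rw [support_indC]; exact hcov))
        refine ⟨a.support, ⟨hcov, ?_⟩, by rw [prod_X_eq_monomial, ← ha]⟩
        intro D hD hDcov
        have hle : indC D ≤ a := (indC_le_iff _ _).2 hD.subset
        refine hmin (indC D) hle ?_ ((hmem _).2 (by rw [support_indC]; exact hDcov))
        intro h
        apply hD.ne
        rw [← h, support_indC]
      · rintro ⟨C, ⟨hcov, hminC⟩, rfl⟩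
        refine ⟨indC C, prod_X_eq_monomial C, ?_, ?_⟩
        · rw [prod_X_eq_monomial]
          exact (hmem _).2 (by rw [support_indC]; exact hcov)
        · intro b hble hbne hbI
          have hcovb : IsVertexCover H ↑b.support := (hmem b).1 hbI
          have hbsub : b.support ⊆ C := by
            rw [← support_indC C]
            exact Finsupp.support_mono hble
          have hne : b.support ≠ C := by
            intro hEq
            exact hbne (by rw [eq_indC_support_of_le C b hble, hEq])
          exact hminC b.support (Finset.ssubset_iff_subset_ne.2 ⟨hbsub, hne⟩) hcovb
    -- covers
    set Cj : Fin m → Finset (Fin n) := fun j => A.erase (α j) with hCj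
    set Cstar : Finset (Fin n) := A.erase (α i₀) ∪ Lv with hCstar
    have adjK : ∀ i j : Fin m, i ≠ j → H.Adj (α i) (α j) := fun i j hij =>
      (hH _ _).2 (Or.inl ⟨i, j, hij, rfl, rfl⟩)
    have adjS : ∀ w, w ∈ Lv → H.Adj (α i₀) w := fun w hw =>
      (hH _ _).2 (Or.inr (Or.inl ⟨rfl, (Finset.mem_Ioo.1 hw).1, (Finset.mem_Ioo.1 hw).2⟩))
    have hαA : ∀ k : Fin m, α k ∈ A := fun k => (hmemA _).2 ⟨k, rfl⟩
    have hkey : ∀ x, x ∈ A → ∃ k : Fin m, x = α k := by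
      intro x hx
      obtain ⟨k, hk⟩ := (hmemA x).1 hx
      exact ⟨k, hk.symm⟩
    have hi₀Lv : α i₀ ∉ Lv := fun h => lt_irrefl _ (Finset.mem_Ioo.1 h).2
    have hi₀Cstar : α i₀ ∉ Cstar := by
      rw [hCstar, Finset.mem_union]
      rintro (h | h)
      · exact Finset.notMem_erase _ _ h
      · exact hi₀Lv h
    have coverCj : ∀ j : Fin m, j ≠ i₀ → IsVertexCover H ↑(Cj j) := by
      intro j hj u v huv
      rcases (hH u v).1 huv with ⟨i, k, hik, rfl, rfl⟩ | ⟨rfl, h1, h2⟩ | ⟨rfl, h1, h2⟩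
      · by_cases hij : i = j
        · subst hij
          exact Or.inr (Finset.mem_erase.2 ⟨fun h => hik.symm (hαinj h), hαA k⟩)
        · exact Or.inl (Finset.mem_erase.2 ⟨fun h => hij (hαinj h), hαA i⟩)
      · exact Or.inl (Finset.mem_erase.2 ⟨fun h => hj (hαinj h).symm, hαA i₀⟩)
      · exact Or.inr (Finset.mem_erase.2 ⟨fun h => hj (hαinj h).symm, hαA i₀⟩)
    have coverCstar : IsVertexCover H ↑Cstar := by
      intro u v huv
      rcases (hH u v).1 huv with ⟨i, k, hik, rfl, rfl⟩ | ⟨rfl, h1, h2⟩ | ⟨rfl, h1, h2⟩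
      · by_cases hii : i = i₀
        · subst hii
          exact Or.inr (Finset.mem_union_left _
            (Finset.mem_erase.2 ⟨fun h => hik.symm (hαinj h), hαA k⟩))
        · exact Or.inl (Finset.mem_union_left _
            (Finset.mem_erase.2 ⟨fun h => hii (hαinj h), hαA i⟩))
      · exact Or.inr (Finset.mem_union_right _ (Finset.mem_Ioo.2 ⟨h1, h2⟩))
      · exact Or.inl (Finset.mem_union_right _ (Finset.mem_Ioo.2 ⟨h1, h2⟩))
    have notCoverOfSsub : ∀ C : Finset (Fin n),
        (∀ x ∈ C, ∃ y, H.Adj x y ∧ y ∉ C) → ∀ D ⊂ C, ¬IsVertexCover H ↑D := by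
      intro C hC D hD hcov
      obtain ⟨x, hxC, hxD⟩ := Finset.exists_of_ssubset hD
      obtain ⟨y, hadj, hyC⟩ := hC x hxC
      rcases hcov hadj with h | h
      · exact hxD h
      · exact hyC (hD.subset h)
    have minCj : ∀ j : Fin m, j ≠ i₀ → ∀ D ⊂ Cj j, ¬IsVertexCover H ↑D := by
      intro j hj
      apply notCoverOfSsub
      intro x hx
      obtain ⟨k, rfl⟩ := hkey x (Finset.mem_of_mem_erase hx)
      have hkj : k ≠ j := fun h => Finset.notMem_erase _ _ (h ▸ hx)
      exact ⟨α j, adjK k j hkj, Finset.notMem_erase _ _⟩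
    have minCstar : ∀ D ⊂ Cstar, ¬IsVertexCover H ↑D := by
      apply notCoverOfSsub
      intro x hx
      rcases Finset.mem_union.1 hx with h | h
      · obtain ⟨k, rfl⟩ := hkey x (Finset.mem_of_mem_erase h)
        have hki : k ≠ i₀ := fun he => Finset.notMem_erase _ _ (he ▸ h)
        exact ⟨α i₀, adjK k i₀ hki, hi₀Cstar⟩
      · exact ⟨α i₀, (adjS x h).symm, hi₀Cstar⟩
    -- classification of minimal covers
    have hclass : ∀ C : Finset (Fin n),
        IsVertexCover H ↑C → (∀ D ⊂ C, ¬IsVertexCover H ↑D) →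
        C = Cstar ∨ ∃ j : Fin m, j ≠ i₀ ∧ C = Cj j := by
      intro C hcov hmin
      by_cases hAll : ∀ k : Fin m, α k ∈ C
      · exfalso
        set j : Fin m := ⟨0, hm⟩ with hj
        have hji : j ≠ i₀ := by
          intro h
          have : (j : ℕ) = (i₀ : ℕ) := by rw [h]
          simp [hj] at this
          omega
        refine hmin (Cj j) ?_ (coverCj j hji)
        rw [Finset.ssubset_iff_subset_ne]
        constructor
        · intro x hx
          obtain ⟨k, rfl⟩ := hkey x (Finset.mem_of_mem_erase hx)
          exact hAll k
        · intro h
          have h2 := hAll j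
          rw [← h] at h2
          exact Finset.notMem_erase (α j) A h2
      · push_neg at hAll
        obtain ⟨j, hjC⟩ := hAll
        have hothers : ∀ k : Fin m, k ≠ j → α k ∈ C := by
          intro k hk
          rcases hcov (adjK k j hk) with h | h
          · exact h
          · exact absurd h hjC
        by_cases hji : j = i₀
        · subst hji
          left
          have hLsub : Lv ⊆ C := by
            intro w hw
            rcases hcov (adjS w hw) with h | h
            · exact absurd h hjC
            · exact h
          have hsub : Cstar ⊆ C := by
            rw [hCstar]
            apply Finset.union_subset _ hLsub
            intro x hx
            obtain ⟨k, rfl⟩ := hkey x (Finset.mem_of_mem_erase hx)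
            exact hothers k (fun h => Finset.notMem_erase _ _ (h ▸ hx))
          by_contra hne
          exact hmin Cstar (Finset.ssubset_iff_subset_ne.2 ⟨hsub, fun h => hne h.symm⟩)
            coverCstar
        · right
          refine ⟨j, hji, ?_⟩
          have hsub : Cj j ⊆ C := by
            intro x hx
            obtain ⟨k, rfl⟩ := hkey x (Finset.mem_of_mem_erase hx)
            exact hothers k (fun h => Finset.notMem_erase _ _ (h ▸ hx))
          by_contra hne
          exact hmin (Cj j) (Finset.ssubset_iff_subset_ne.2 ⟨hsub, fun h => hne h.symm⟩)
            (coverCj j hji)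
    -- products
    have hprod_j : ∀ j : Fin m,
        (∏ l ∈ Finset.univ.erase j, X (α l) : MvPolynomial (Fin n) K) = ∏ i ∈ Cj j, X i := by
      intro j
      have hCjdef : Cj j = (Finset.univ.erase j).image α := by
        show A.erase (α j) = _
        rw [hA, Finset.image_erase hαinj]
      rw [hCjdef, Finset.prod_image (fun x _ y _ h => hαinj h)]
    have hdisj : Disjoint (A.erase (α i₀)) Lv := by
      rw [Finset.disjoint_left]
      intro x hx hxL
      exact (hLvA x).1 hxL (Finset.mem_of_mem_erase hx)
    have hprod_star :
        ((∏ l ∈ Finset.univ.erase i₀, X (α l)) * ∏ w ∈ Lv, X w : MvPolynomial (Fin n) K)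
          = ∏ i ∈ Cstar, X i := by
      rw [hCstar, Finset.prod_union hdisj, hprod_j i₀]
    have hCjinj : ∀ j j' : Fin m, Cj j = Cj j' → j = j' := by
      intro j j' h
      by_contra hne
      have hαne : α j ≠ α j' := fun he => hne (hαinj he)
      have : α j ∈ Cj j' := Finset.mem_erase.2 ⟨hαne, hαA j⟩
      rw [← h] at this
      exact Finset.notMem_erase _ _ this
    -- conclusion
    refine ⟨_, rfl, ?_, ?_⟩
    · ext p
      simp only [Set.mem_setOf_eq, Finset.coe_insert, Set.mem_insert_iff, Finset.coe_image,
        Set.mem_image, Finset.mem_coe, Finset.mem_erase, Finset.mem_univ, and_true]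
      rw [hgen]
      constructor
      · rintro ⟨C, ⟨hcov, hmin⟩, rfl⟩
        rcases hclass C hcov hmin with rfl | ⟨j, hj, rfl⟩
        · exact Or.inl hprod_star.symm
          
        · exact Or.inr ⟨j, hj, hprod_j j⟩
      · rintro (rfl | ⟨j, hj, rfl⟩)
        · exact ⟨Cstar, ⟨coverCstar, minCstar⟩, hprod_star⟩
        · exact ⟨Cj j, ⟨coverCj j hj, minCj j hj⟩, hprod_j j⟩
    · rw [Finset.card_insert_of_notMem, Finset.card_image_of_injOn,
        Finset.card_erase_of_mem (Finset.mem_univ _), Finset.card_univ, Fintype.card_fin]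
      · omega
      · intro j _ j' _ h
        dsimp only at h
        rw [hprod_j j, hprod_j j'] at h
        exact hCjinj j j' (prod_X_injC _ _ h)
      · intro hmem'
        obtain ⟨j, hj, hje⟩ := Finset.mem_image.1 hmem'
        have hj' : j ≠ i₀ := (Finset.mem_erase.1 hj).1
        rw [hprod_j j] at hje
        have hCC : Cj j = Cstar := prod_X_injC _ _ (hje.trans hprod_star)
        have : α i₀ ∈ Cj j :=
          Finset.mem_erase.2 ⟨fun h => hj' (hαinj h).symm, hαA i₀⟩
        rw [hCC] at this
        exact hi₀Cstar this
end

section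
/- Let H be the connected graph on n vertices that is the union of a complete graph K_m (m < n) and star graphs centered at vertices of K_m, each star meeting K_m only in its center, distinct stars being otherwise vertex-disjoint, and the leaves of the stars being exactly the n − m vertices outside K_m. Then q(I_c(H)) = 1; that is, the ideal of vertex covers I_c(H) admits an ordering u_1,…,u_t of its minimal monomial generators with linear quotients in which, for every j with 2 ≤ j ≤ t, the colon ideal (u_1,…,u_{j−1}) : (u_j) is generated by exactly one variable. -/
open MvPolynomial Finset

noncomputable def ind {n : ℕ} (C : Finset (Fin n)) : Fin n →₀ ℕ :=
  ∑ i ∈ C, Finsupp.single i 1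

lemma ind_apply {n : ℕ} (C : Finset (Fin n)) (x : Fin n) :
    ind C x = if x ∈ C then 1 else 0 := by
  classical
  rw [ind, Finsupp.finset_sum_apply]
  simp [Finsupp.single_apply]

lemma ind_le_iff {n : ℕ} {C D : Finset (Fin n)} : ind C ≤ ind D ↔ C ⊆ D := by
  constructor
  · intro h x hx
    have := (Finsupp.le_def.1 h) x
    rw [ind_apply, ind_apply, if_pos hx] at this
    by_contra hxD
    rw [if_neg hxD] at this
    omega
  · intro h
    rw [Finsupp.le_def]
    intro x
    rw [ind_apply, ind_apply]
    by_cases hx : x ∈ C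
    · rw [if_pos hx, if_pos (h hx)]
    · simp [hx]

lemma ind_inj {n : ℕ} {C D : Finset (Fin n)} (h : ind C = ind D) : C = D :=
  Finset.Subset.antisymm (ind_le_iff.1 h.le) (ind_le_iff.1 h.ge)

lemma prod_X_eq {K : Type*} [Field K] {n : ℕ} (C : Finset (Fin n)) :
    (∏ i ∈ C, X i : MvPolynomial (Fin n) K) = monomial (ind C) 1 := by
  rw [ind, monomial_sum_one]
  rfl

lemma coverIdeal_eq {K : Type*} [Field K] {n : ℕ} (H : SimpleGraph (Fin n)) :
    coverIdeal K H = Ideal.span ((fun s => monomial s (1 : K)) ''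
      (ind '' {C : Finset (Fin n) | IsVertexCover H ↑C})) := by
  unfold coverIdeal
  congr 1
  ext p
  constructor
  · rintro ⟨C, hC, rfl⟩
    exact ⟨ind C, ⟨C, hC, rfl⟩, (prod_X_eq C).symm⟩
  · rintro ⟨s, ⟨C, hC, rfl⟩, rfl⟩
    exact ⟨C, hC, (prod_X_eq C).symm⟩

lemma support_monomial_one {K : Type*} [Field K] {n : ℕ} (a : Fin n →₀ ℕ) :
    (monomial a (1 : K)).support = {a} := by
  classical
  rw [MvPolynomial.support_monomial, if_neg one_ne_zero]

lemma mem_coverIdeal_monomial {K : Type*} [Field K] {n : ℕ} (H : SimpleGraph (Fin n))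
    (a : Fin n →₀ ℕ) :
    (monomial a (1 : K)) ∈ coverIdeal K H ↔
      ∃ C : Finset (Fin n), IsVertexCover H ↑C ∧ ind C ≤ a := by
  rw [coverIdeal_eq, mem_ideal_span_monomial_image]
  rw [support_monomial_one]
  constructor
  · intro h
    obtain ⟨si, ⟨C, hC, rfl⟩, hle⟩ := h a (Finset.mem_singleton_self a)
    exact ⟨C, hC, hle⟩
  · rintro ⟨C, hC, hle⟩ xi hxi
    rw [Finset.mem_singleton] at hxi
    exact ⟨ind C, ⟨C, hC, rfl⟩, hxi ▸ hle⟩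

def MinCover {n : ℕ} (H : SimpleGraph (Fin n)) (C : Finset (Fin n)) : Prop :=
  IsVertexCover H ↑C ∧ ∀ B ⊆ C, IsVertexCover H ↑B → B = C

lemma isMinGen_iff {K : Type*} [Field K] {n : ℕ} (H : SimpleGraph (Fin n))
    (p : MvPolynomial (Fin n) K) :
    IsMinimalMonomialGen (coverIdeal K H) p ↔
      ∃ C : Finset (Fin n), MinCover H C ∧ p = monomial (ind C) 1 := by
  constructor
  · rintro ⟨a, rfl, hmem, hmin⟩
    obtain ⟨C, hC, hle⟩ := (mem_coverIdeal_monomial H a).1 hmem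
    have heq : ind C = a := by
      by_contra hne
      exact hmin (ind C) hle hne ((mem_coverIdeal_monomial H (ind C)).2 ⟨C, hC, le_rfl⟩)
    refine ⟨C, ⟨hC, ?_⟩, by rw [heq]⟩
    intro B hBC hB
    have hBle : ind B ≤ a := heq ▸ ind_le_iff.2 hBC
    have hBeq : ind B = a := by
      by_contra hne
      exact hmin (ind B) hBle hne ((mem_coverIdeal_monomial H (ind B)).2 ⟨B, hB, le_rfl⟩)
    exact ind_inj (hBeq.trans heq.symm)
  · rintro ⟨C, ⟨hC, hmin⟩, rfl⟩
    refine ⟨ind C, rfl, (mem_coverIdeal_monomial H (ind C)).2 ⟨C, hC, le_rfl⟩, ?_⟩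
    intro b hb hne hmem
    obtain ⟨C', hC', hle⟩ := (mem_coverIdeal_monomial H b).1 hmem
    have hsub : C' ⊆ C := ind_le_iff.1 (hle.trans hb)
    have : C' = C := hmin C' hsub hC'
    exact hne (le_antisymm hb (this ▸ hle))

lemma colon_eq_span_X {K : Type*} [Field K] {n : ℕ} (s : Set (Fin n →₀ ℕ))
    (b : Fin n →₀ ℕ) (k : Fin n)
    (h1 : ∀ a ∈ s, 1 ≤ a k) (h2 : b k = 0)
    (h3 : ∃ a ∈ s, a ≤ b + Finsupp.single k 1) :
    Submodule.colon (Ideal.span ((fun e => monomial e (1 : K)) '' s))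
        (Ideal.span {monomial b (1 : K)})
      = Ideal.span {(X k : MvPolynomial (Fin n) K)} := by
  apply le_antisymm
  · intro r hr
    rw [Ideal.mem_colon_span_singleton, mem_ideal_span_monomial_image] at hr
    have hXk : ({(X k : MvPolynomial (Fin n) K)} : Set _) =
        (fun e => monomial e (1 : K)) '' {Finsupp.single k 1} := by
      simp [X]
    rw [hXk, mem_ideal_span_monomial_image]
    intro d hd
    refine ⟨Finsupp.single k 1, Set.mem_singleton _, ?_⟩
    have hcoeff : (r * monomial b (1 : K)).coeff (d + b) = r.coeff d := by
      rw [MvPolynomial.coeff_mul_monomial, mul_one]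
    have hmem : d + b ∈ (r * monomial b (1 : K)).support := by
      rw [MvPolynomial.mem_support_iff, hcoeff]
      exact MvPolynomial.mem_support_iff.1 hd
    obtain ⟨a, ha, hle⟩ := hr (d + b) hmem
    have : 1 ≤ d k := by
      have h4 := (Finsupp.le_def.1 hle) k
      have h5 := h1 a ha
      simp [Finsupp.add_apply, h2] at h4
      omega
    rw [Finsupp.single_le_iff]
    exact this
  · rw [Ideal.span_le, Set.singleton_subset_iff]
    show X k ∈ _
    rw [SetLike.mem_coe, Ideal.mem_colon_span_singleton]
    have : (X k : MvPolynomial (Fin n) K) * monomial b 1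
        = monomial (b + Finsupp.single k 1) 1 := by
      rw [X, MvPolynomial.monomial_mul, one_mul, add_comm]
    rw [this, mem_ideal_span_monomial_image, support_monomial_one]
    intro xi hxi
    rw [Finset.mem_singleton] at hxi
    obtain ⟨a, ha, hle⟩ := h3
    exact ⟨a, ha, hxi ▸ hle⟩

lemma main_aux {K : Type*} [Field K] {n : ℕ} (H : SimpleGraph (Fin n))
    (D : Finset (Fin n)) (E : Fin n → Finset (Fin n)) (as : List (Fin n))
    (hset : ∀ C : Finset (Fin n), MinCover H C ↔ C = D ∨ ∃ a ∈ as, C = E a)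
    (hnd : as.Nodup)
    (hDE : ∀ a ∈ as, D ≠ E a)
    (hEinj : ∀ a ∈ as, ∀ b ∈ as, E a = E b → a = b)
    (hkD : ∀ a ∈ as, a ∈ D)
    (hkE : ∀ a ∈ as, ∀ b ∈ as, a ≠ b → b ∈ E a)
    (hnotin : ∀ a ∈ as, a ∉ E a)
    (hsub : ∀ a ∈ as, D ⊆ insert a (E a)) :
    ∃ (t : ℕ) (u : Fin t → MvPolynomial (Fin n) K),
      Function.Injective u ∧
      Set.range u = {p | IsMinimalMonomialGen (coverIdeal K H) p} ∧
      ∀ j : Fin t, 0 < (j : ℕ) →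
        ∃ i : Fin n,
          Submodule.colon (Ideal.span (u '' {i' : Fin t | (i' : ℕ) < (j : ℕ)}))
              (Ideal.span {u j})
            = Ideal.span {(X i : MvPolynomial (Fin n) K)} := by
  classical
  set g : Fin (as.length + 1) → Finset (Fin n) :=
    fun j => Fin.cases D (fun i => E (as.get i)) j with hg
  have hg0 : g 0 = D := rfl
  have hgs : ∀ i : Fin as.length, g i.succ = E (as.get i) := fun i => by
    simp [hg]
  have hget : Function.Injective as.get := List.nodup_iff_injective_get.1 hnd
  have hginj : Function.Injective g := by
    intro i j hij
    induction i using Fin.cases with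
    | zero =>
      induction j using Fin.cases with
      | zero => rfl
      | succ j =>
        rw [hg0, hgs] at hij
        exact absurd hij (hDE _ (as.get_mem _))
    | succ i =>
      induction j using Fin.cases with
      | zero =>
        rw [hg0, hgs] at hij
        exact absurd hij.symm (hDE _ (as.get_mem _))
      | succ j =>
        rw [hgs, hgs] at hij
        exact congrArg Fin.succ (hget (hEinj _ (as.get_mem _) _ (as.get_mem _) hij))
  refine ⟨as.length + 1, fun j => monomial (ind (g j)) (1 : K), ?_, ?_, ?_⟩
  · intro i j hij
    simp only [monomial_eq_monomial_iff] at hij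
    rcases hij with ⟨h1, _⟩ | ⟨h1, _⟩
    · exact hginj (ind_inj h1)
    · exact absurd h1 one_ne_zero
  · ext p
    simp only [Set.mem_range, Set.mem_setOf_eq, isMinGen_iff]
    constructor
    · rintro ⟨j, rfl⟩
      refine ⟨g j, ?_, rfl⟩
      rw [hset]
      induction j using Fin.cases with
      | zero => exact Or.inl hg0
      | succ i => exact Or.inr ⟨as.get i, as.get_mem _, hgs i⟩
    · rintro ⟨C, hC, rfl⟩
      rw [hset] at hC
      rcases hC with rfl | ⟨a, ha, rfl⟩
      · exact ⟨0, by rw [hg0]⟩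
      · obtain ⟨i, hi⟩ := List.mem_iff_get.1 ha
        exact ⟨i.succ, by rw [hgs, hi]⟩
  · intro j hj
    have hjne : j ≠ 0 := by
      intro h
      rw [h] at hj
      simp at hj
    obtain ⟨i, rfl⟩ := Fin.exists_succ_eq_of_ne_zero hjne
    refine ⟨as.get i, ?_⟩
    have him : (fun j' => monomial (ind (g j')) (1 : K)) ''
          {i' : Fin (as.length + 1) | (i' : ℕ) < ((i.succ : Fin (as.length + 1)) : ℕ)}
        = (fun e => monomial e (1 : K)) '' ((fun j' => ind (g j')) ''
          {i' : Fin (as.length + 1) | (i' : ℕ) < ((i.succ : Fin (as.length + 1)) : ℕ)}) := by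
      rw [Set.image_image]
    rw [him]
    apply colon_eq_span_X
    · rintro a ⟨i', hi', rfl⟩
      show 1 ≤ ind (g i') (as.get i)
      rw [ind_apply, if_pos]
      induction i' using Fin.cases with
      | zero => exact hg0 ▸ hkD _ (as.get_mem _)
      | succ i'' =>
        rw [hgs]
        have hlt : (i''.succ : ℕ) < (i.succ : ℕ) := hi'
        have hne : i'' ≠ i := by
          intro h
          rw [h] at hlt
          omega
        exact hkE _ (as.get_mem _) _ (as.get_mem _) (fun h => hne (hget h))
    · rw [hgs, ind_apply, if_neg (hnotin _ (as.get_mem _))]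
    · refine ⟨ind (g 0), ⟨0, ?_, rfl⟩, ?_⟩
      · show (0 : ℕ) < ((i.succ : Fin (as.length + 1)) : ℕ)
        simp [Fin.val_succ]
      · rw [hg0, hgs, Finsupp.le_def]
        intro x
        rw [ind_apply, Finsupp.add_apply, ind_apply, Finsupp.single_apply]
        by_cases hxD : x ∈ D
        · rw [if_pos hxD]
          rcases Finset.mem_insert.1 (hsub _ (as.get_mem _) hxD) with h | h
          · rw [if_pos h.symm]
            exact Nat.le_add_left 1 _
          · rw [if_pos h]
            exact Nat.le_add_right 1 _
        · rw [if_neg hxD]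
          exact Nat.zero_le _

/-- For the graph `H` (complete graph on `A`, `|A| = m < n`, with stars centered at the
vertices of `A`, the leaves being exactly the vertices outside `A`), one has
`q(I_c(H)) = 1`: there is an ordering `u 0, …, u (t-1)` of the minimal monomial
generators of `I_c(H)` with linear quotients in which every colon ideal
`(u 0, …, u (j-1)) : (u j)` (for `j ≥ 1`) is generated by exactly one variable. -/
theorem coverIdeal_q_eq_one
    (n m : ℕ) (hmn : m < n) (K : Type*) [Field K]
    (A : Finset (Fin n)) (hA : A.card = m)
    (f : Fin n → Fin n) (hf : ∀ v : Fin n, v ∉ A → f v ∈ A)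
    (H : SimpleGraph (Fin n))
    (hH : ∀ u v : Fin n, H.Adj u v ↔
      (u ∈ A ∧ v ∈ A ∧ u ≠ v) ∨ (u ∉ A ∧ v = f u) ∨ (v ∉ A ∧ u = f v)) :
    ∃ (t : ℕ) (u : Fin t → MvPolynomial (Fin n) K),
      Function.Injective u ∧
      Set.range u = {p | IsMinimalMonomialGen (coverIdeal K H) p} ∧
      ∀ j : Fin t, 0 < (j : ℕ) →
        ∃ i : Fin n,
          Submodule.colon (Ideal.span (u '' {i' : Fin t | (i' : ℕ) < (j : ℕ)}))
              (Ideal.span {u j})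
            = Ideal.span {(X i : MvPolynomial (Fin n) K)} := by
  classical
  set Cov : Fin n → Finset (Fin n) :=
    fun a => A.erase a ∪ Finset.univ.filter (fun v => v ∉ A ∧ f v = a) with hCovdef
  have hmemCov : ∀ a x : Fin n, x ∈ Cov a ↔ (x ∈ A ∧ x ≠ a) ∨ (x ∉ A ∧ f x = a) := by
    intro a x
    simp only [hCovdef, Finset.mem_union, Finset.mem_erase, Finset.mem_filter,
      Finset.mem_univ, true_and]
    tauto
  have ha_notin_Cov : ∀ a : Fin n, a ∉ Cov a := by
    intro a h
    rcases (hmemCov a a).1 h with ⟨_, hne⟩ | ⟨hnA, hfa⟩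
    · exact hne rfl
    · exact hnA (hfa ▸ hf a hnA)
  have hCovCover : ∀ a ∈ A, IsVertexCover H ↑(Cov a) := by
    intro a ha u v h
    rw [hH] at h
    simp only [Finset.mem_coe, hmemCov]
    rcases h with ⟨huA, hvA, huv⟩ | ⟨huA, hv⟩ | ⟨hvA, hu⟩
    · by_cases hva : v = a
      · exact Or.inl (Or.inl ⟨huA, hva ▸ huv⟩)
      · exact Or.inr (Or.inl ⟨hvA, hva⟩)
    · by_cases hva : v = a
      · exact Or.inl (Or.inr ⟨huA, by rw [← hv, hva]⟩)
      · exact Or.inr (Or.inl ⟨by rw [hv]; exact hf u huA, hva⟩)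
    · by_cases hua : u = a
      · exact Or.inr (Or.inr ⟨hvA, by rw [← hu, hua]⟩)
      · exact Or.inl (Or.inl ⟨by rw [hu]; exact hf v hvA, hua⟩)
  have hAcover : IsVertexCover H ↑A := by
    intro u v h
    rw [hH] at h
    simp only [Finset.mem_coe]
    rcases h with ⟨huA, _, _⟩ | ⟨_, hv⟩ | ⟨_, hu⟩
    · exact Or.inl huA
    · exact Or.inr (by rw [hv]; exact hf u ‹u ∉ A›)
    · exact Or.inl (by rw [hu]; exact hf v ‹v ∉ A›)
  have hCovMin : ∀ a ∈ A, MinCover H (Cov a) := by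
    intro a ha
    refine ⟨hCovCover a ha, ?_⟩
    intro B hB hBc
    apply Finset.Subset.antisymm hB
    intro x hx
    rcases (hmemCov a x).1 hx with ⟨hxA, hxa⟩ | ⟨hxA, hfx⟩
    · have hadj : H.Adj a x := (hH a x).2 (Or.inl ⟨ha, hxA, Ne.symm hxa⟩)
      rcases hBc hadj with h | h
      · exact absurd (hB h) (ha_notin_Cov a)
      · exact h
    · have hadj : H.Adj x a := (hH x a).2 (Or.inr (Or.inl ⟨hxA, hfx.symm⟩))
      rcases hBc hadj with h | h
      · exact h
      · exact absurd (hB h) (ha_notin_Cov a)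
  have hclass : ∀ B : Finset (Fin n), MinCover H B → B = A ∨ ∃ a ∈ A, B = Cov a := by
    rintro B ⟨hBc, hBm⟩
    by_cases hAB : A ⊆ B
    · exact Or.inl (hBm A hAB hAcover).symm
    · right
      obtain ⟨a, ha, haB⟩ := Finset.not_subset.1 hAB
      refine ⟨a, ha, (hBm (Cov a) ?_ (hCovCover a ha)).symm⟩
      intro x hx
      rcases (hmemCov a x).1 hx with ⟨hxA, hxa⟩ | ⟨hxA, hfx⟩
      · have hadj : H.Adj a x := (hH a x).2 (Or.inl ⟨ha, hxA, Ne.symm hxa⟩)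
        rcases hBc hadj with h | h
        · exact absurd h haB
        · exact h
      · have hadj : H.Adj x a := (hH x a).2 (Or.inr (Or.inl ⟨hxA, hfx.symm⟩))
        rcases hBc hadj with h | h
        · exact h
        · exact absurd h haB
  have hCovInj : ∀ a ∈ A, ∀ b ∈ A, Cov a = Cov b → a = b := by
    intro a ha b hb h
    by_contra hne
    have : b ∈ Cov a := (hmemCov a b).2 (Or.inl ⟨hb, fun hh => hne hh.symm⟩)
    rw [h] at this
    exact ha_notin_Cov b this
  have hsubA : ∀ a : Fin n, A ⊆ insert a (Cov a) := by
    intro a x hx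
    by_cases hxa : x = a
    · exact Finset.mem_insert.2 (Or.inl hxa)
    · exact Finset.mem_insert.2 (Or.inr ((hmemCov a x).2 (Or.inl ⟨hx, hxa⟩)))
  have hkEA : ∀ a ∈ A, ∀ b ∈ A, a ≠ b → b ∈ Cov a := by
    intro a _ b hb hne
    exact (hmemCov a b).2 (Or.inl ⟨hb, fun h => hne h.symm⟩)
  by_cases hcond : ∀ a ∈ A, ∃ v : Fin n, v ∉ A ∧ f v = a
  · -- A is a minimal cover; list: A :: (Cov a for a ∈ A)
    have hAmin : MinCover H A := by
      refine ⟨hAcover, ?_⟩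
      intro B hB hBc
      apply Finset.Subset.antisymm hB
      intro x hxA
      obtain ⟨v, hvA, hfv⟩ := hcond x hxA
      have hadj : H.Adj v x := (hH v x).2 (Or.inr (Or.inl ⟨hvA, hfv.symm⟩))
      rcases hBc hadj with h | h
      · exact absurd (hB h) hvA
      · exact h
    apply main_aux H A Cov A.toList
    · intro C
      constructor
      · intro hC
        rcases hclass C hC with h | ⟨a, ha, h⟩
        · exact Or.inl h
        · exact Or.inr ⟨a, Finset.mem_toList.2 ha, h⟩
      · rintro (rfl | ⟨a, ha, rfl⟩)
        · exact hAmin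
        · exact hCovMin a (Finset.mem_toList.1 ha)
    · exact Finset.nodup_toList A
    · intro a ha h
      have := ha_notin_Cov a
      rw [← h] at this
      exact this (Finset.mem_toList.1 ha)
    · intro a ha b hb h
      exact hCovInj a (Finset.mem_toList.1 ha) b (Finset.mem_toList.1 hb) h
    · intro a ha
      exact Finset.mem_toList.1 ha
    · intro a ha b hb hne
      exact hkEA a (Finset.mem_toList.1 ha) b (Finset.mem_toList.1 hb) hne
    · intro a _
      exact ha_notin_Cov a
    · intro a _
      exact hsubA a
  · -- some a₀ ∈ A has no leaves; list: Cov a₀ :: (Cov a for a ∈ A.erase a₀)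
    push_neg at hcond
    obtain ⟨a₀, ha₀, hno⟩ := hcond
    have hD : Cov a₀ = A.erase a₀ := by
      ext x
      rw [hmemCov, Finset.mem_erase]
      constructor
      · rintro (⟨hxA, hxa⟩ | ⟨hxA, hfx⟩)
        · exact ⟨hxa, hxA⟩
        · exact absurd hfx (hno x hxA)
      · rintro ⟨hxa, hxA⟩
        exact Or.inl ⟨hxA, hxa⟩
    have hAnotmin : ¬ MinCover H A := by
      rintro ⟨_, hm⟩
      have h1 : A.erase a₀ = A := hm (A.erase a₀) (Finset.erase_subset _ _)
        (hD ▸ hCovCover a₀ ha₀)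
      have : a₀ ∈ A.erase a₀ := by rw [h1]; exact ha₀
      exact (Finset.notMem_erase a₀ A) this
    apply main_aux H (Cov a₀) Cov (A.erase a₀).toList
    · intro C
      constructor
      · intro hC
        rcases hclass C hC with rfl | ⟨a, ha, h⟩
        · exact absurd hC hAnotmin
        · by_cases haa : a = a₀
          · exact Or.inl (haa ▸ h)
          · exact Or.inr ⟨a, Finset.mem_toList.2 (Finset.mem_erase.2 ⟨haa, ha⟩), h⟩
      · rintro (rfl | ⟨a, ha, rfl⟩)
        · exact hCovMin a₀ ha₀
        · exact hCovMin a (Finset.mem_of_mem_erase (Finset.mem_toList.1 ha))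
    · exact Finset.nodup_toList _
    · intro a ha h
      have haA := Finset.mem_toList.1 ha
      have := hCovInj a₀ ha₀ a (Finset.mem_of_mem_erase haA) h
      exact (Finset.mem_erase.1 haA).1 this.symm
    · intro a ha b hb h
      exact hCovInj a (Finset.mem_of_mem_erase (Finset.mem_toList.1 ha))
        b (Finset.mem_of_mem_erase (Finset.mem_toList.1 hb)) h
    · intro a ha
      have haA := Finset.mem_toList.1 ha
      exact (hmemCov a₀ a).2 (Or.inl ⟨Finset.mem_of_mem_erase haA, (Finset.mem_erase.1 haA).1⟩)
    · intro a ha b hb hne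
      exact hkEA a (Finset.mem_of_mem_erase (Finset.mem_toList.1 ha))
        b (Finset.mem_of_mem_erase (Finset.mem_toList.1 hb)) hne
    · intro a _
      exact ha_notin_Cov a
    · intro a _
      intro x hx
      rw [hD] at hx
      exact hsubA a (Finset.mem_of_mem_erase hx)
end

section
/- Let H be the connected graph on n vertices that is the union of a complete graph K_m (m < n) and star graphs centered at vertices of K_m, each star meeting K_m only in its center, distinct stars being otherwise vertex-disjoint, and the leaves of the stars being exactly the n − m vertices outside K_m. Then the projective dimension of R/I_c(H) as an R-module equals 2. -/
open MvPolynomial Finset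

noncomputable def killX {K : Type*} [CommSemiring K] {n : ℕ} (v : Fin n) :
    MvPolynomial (Fin n) K →+* MvPolynomial (Fin n) K :=
  eval₂Hom C (fun u => if u = v then 0 else X u)

lemma killX_X_self {K : Type*} [CommSemiring K] {n : ℕ} (v : Fin n) :
    killX (K := K) v (X v) = 0 := by simp [killX]

lemma killX_X_ne {K : Type*} [CommSemiring K] {n : ℕ} {v u : Fin n} (h : u ≠ v) :
    killX (K := K) v (X u) = X u := by simp [killX, h]

lemma X_dvd_sub_killX {K : Type*} [CommRing K] {n : ℕ} (v : Fin n)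
    (p : MvPolynomial (Fin n) K) : X v ∣ p - killX v p := by
  induction p using MvPolynomial.induction_on with
  | C a => simp [killX]
  | add p q hp hq =>
      rw [map_add]
      have h : p + q - (killX v p + killX v q) = (p - killX v p) + (q - killX v q) := by ring
      rw [h]; exact dvd_add hp hq
  | mul_X p u hp =>
      rw [map_mul]
      by_cases h : u = v
      · subst h; rw [killX_X_self, mul_zero, sub_zero]; exact dvd_mul_left _ _
      · rw [killX_X_ne h]
        have h2 : p * X u - killX v p * X u = (p - killX v p) * X u := by ring
        rw [h2]; exact hp.mul_right _

lemma killX_eq_zero_of_dvd {K : Type*} [CommSemiring K] {n : ℕ} {v : Fin n}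
    {p : MvPolynomial (Fin n) K} (h : X v ∣ p) : killX v p = 0 := by
  obtain ⟨q, rfl⟩ := h
  rw [map_mul, killX_X_self, zero_mul]

lemma killX_prod_X {K : Type*} [CommSemiring K] {n : ℕ} {v : Fin n}
    {S : Finset (Fin n)} (h : v ∉ S) :
    killX (K := K) v (∏ i ∈ S, X i) = ∏ i ∈ S, X i := by
  rw [map_prod]
  exact Finset.prod_congr rfl fun i hi => killX_X_ne (by rintro rfl; exact h hi)

lemma prodX_homog {K : Type*} [CommSemiring K] {n : ℕ} (S : Finset (Fin n)) :
    ((∏ i ∈ S, X i : MvPolynomial (Fin n) K)).IsHomogeneous S.card := by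
  have := MvPolynomial.IsHomogeneous.prod S X (fun _ => 1)
    (fun i _ => isHomogeneous_X K i)
  simpa using this

lemma prodX_ne_zero {K : Type*} [Field K] {n : ℕ} (S : Finset (Fin n)) :
    (∏ i ∈ S, X i : MvPolynomial (Fin n) K) ≠ 0 :=
  Finset.prod_ne_zero_iff.mpr fun i _ => MvPolynomial.X_ne_zero i

lemma prodX_constantCoeff {K : Type*} [CommSemiring K] {n : ℕ} {S : Finset (Fin n)}
    (h : S.Nonempty) :
    constantCoeff (∏ i ∈ S, X i : MvPolynomial (Fin n) K) = 0 := by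
  rw [map_prod]
  exact Finset.prod_eq_zero h.choose_spec (by simp)

section Abstract
variable {K : Type*} [Field K] {n : ℕ}

lemma abstract_resolution (k : ℕ) (hk : k ≠ 0)
    (I : Ideal (MvPolynomial (Fin n) K))
    (g : Fin (k + 1) → MvPolynomial (Fin n) K)
    (a : Fin k → Fin n) (w : Fin k → MvPolynomial (Fin n) K)
    (d : Fin (k + 1) → ℕ)
    (hspan : Ideal.span (Set.range g) = I)
    (hg0 : ∀ j, g j ≠ 0)
    (hghom : ∀ j, (g j).IsHomogeneous (d j))
    (hgc : ∀ j, constantCoeff (g j) = 0)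
    (hsyz : ∀ i : Fin k, X (a i) * g i.succ = w i * g 0)
    (hfree : ∀ i : Fin k, killX (a i) (g i.succ) = g i.succ)
    (hdvd : ∀ (i : Fin k) (j : Fin (k + 1)), j ≠ i.succ → X (a i) ∣ g j)
    (hwhom : ∀ i : Fin k, (w i).IsHomogeneous (1 + d i.succ - d 0))
    (hlt : ∀ i : Fin k, d 0 < 1 + d i.succ) :
    ∃ (rk : ℕ → ℕ) (dgr : ∀ j : ℕ, Fin (rk j) → ℕ)
      (g' : Fin (rk 0) → MvPolynomial (Fin n) K)
      (M : ∀ j : ℕ, Matrix (Fin (rk j)) (Fin (rk (j + 1))) (MvPolynomial (Fin n) K)),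
      IsMinimalGradedFreeResolution I rk dgr g' M ∧
      (∀ j : ℕ, 2 ≤ j → rk j = 0) ∧ rk 1 ≠ 0 := by
  classical
  set rk : ℕ → ℕ := fun j => match j with | 0 => k + 1 | 1 => k | _ + 2 => 0 with hrk
  set M₀ : Matrix (Fin (k + 1)) (Fin k) (MvPolynomial (Fin n) K) :=
    fun r i => if r = i.succ then X (a i) else if r = 0 then -(w i) else 0 with hM₀
  have hmv0 : ∀ q : Fin k → MvPolynomial (Fin n) K, M₀.mulVec q 0 = ∑ i, -(w i) * q i := by
    intro q
    simp [hM₀, Matrix.mulVec, dotProduct, (Fin.succ_ne_zero _).symm]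
  have hmvs : ∀ (q : Fin k → MvPolynomial (Fin n) K) (i : Fin k), M₀.mulVec q i.succ = X (a i) * q i := by
    intro q i
    simp [hM₀, Matrix.mulVec, dotProduct, Fin.succ_inj, Fin.succ_ne_zero]
  have hsum : ∀ c : Fin (k + 1) → MvPolynomial (Fin n) K,
      (Fintype.linearCombination (MvPolynomial (Fin n) K)) g c = c 0 * g 0 + ∑ i : Fin k, c i.succ * g i.succ := by
    intro c
    rw [Fintype.linearCombination_apply, Fin.sum_univ_succ]
    simp [smul_eq_mul]
  refine ⟨rk,
    fun j => match j with
      | 0 => d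
      | 1 => fun i => 1 + d i.succ
      | _ + 2 => Fin.elim0,
    g,
    fun j => match j with
      | 0 => M₀
      | _ + 1 => 0,
    ⟨hspan, hghom, hgc, ?_, ?_, ?_, ?_⟩, ?_, hk⟩
  · -- homogeneity of matrix entries
    intro j r i
    match j with
    | 0 =>
        show (if r = i.succ then X (a i) else if r = 0 then -(w i) else 0).IsHomogeneous
          (1 + d i.succ - d r)
        by_cases h1 : r = i.succ
        · have he : 1 + d i.succ - d r = 1 := by rw [h1]; omega
          rw [if_pos h1, he]
          exact isHomogeneous_X K (a i)
        · by_cases h2 : r = 0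
          · rw [if_neg h1, if_pos h2, h2]
            exact (hwhom i).neg
          · rw [if_neg h1, if_neg h2]
            exact isHomogeneous_zero _ _ _
    | (j + 1) => exact i.elim0
  · -- minimality
    intro j r i hle
    match j with
    | 0 =>
        show (if r = i.succ then X (a i) else if r = 0 then -(w i) else 0) = 0
        have hle' : 1 + d i.succ ≤ d r := hle
        have h1 : r ≠ i.succ := by
          rintro rfl
          omega
        have h2 : r ≠ 0 := by
          rintro rfl
          have := hlt i
          omega
        rw [if_neg h1, if_neg h2]
    | (j + 1) => exact i.elim0
  · -- ker = range of M 0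
    apply le_antisymm
    · rintro c hc
      have hc' : c 0 * g 0 + ∑ i : Fin k, c i.succ * g i.succ = 0 := by
        rw [← hsum c]; exact hc
      choose q hq using fun i => X_dvd_sub_killX (a i) (c i.succ)
      have hs0 : ∀ i : Fin k, killX (a i) (c i.succ) = 0 := by
        intro i
        have h0 := congrArg (killX (a i)) hc'
        rw [map_zero, map_add, map_mul, map_sum] at h0
        rw [killX_eq_zero_of_dvd (hdvd i 0 (Fin.succ_ne_zero i).symm), mul_zero,
          zero_add] at h0
        rw [Finset.sum_eq_single i ?_ (by simp)] at h0
        · rw [map_mul, hfree i] at h0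
          rcases mul_eq_zero.mp h0 with h | h
          · exact h
          · exact absurd h (hg0 _)
        · intro b _ hbne
          rw [map_mul,
            killX_eq_zero_of_dvd (hdvd i b.succ (fun hh => hbne (Fin.succ_injective _ hh))),
            mul_zero]
      have hqc : ∀ i : Fin k, c i.succ = X (a i) * q i := by
        intro i
        have := hq i
        rw [hs0 i, sub_zero] at this
        exact this
      refine ⟨q, ?_⟩
      rw [Matrix.mulVecLin_apply]
      funext r
      induction r using Fin.cases with
      | zero =>
          rw [hmv0]
          have h2 : (c 0 + ∑ i : Fin k, w i * q i) * g 0 = 0 := by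
            rw [add_mul, Finset.sum_mul]
            rw [← hc']
            congr 1
            apply Finset.sum_congr rfl
            intro i _
            rw [hqc i]
            rw [show X (a i) * q i * g i.succ = q i * (X (a i) * g i.succ) by ring, hsyz i]
            ring
          have h3 := (mul_eq_zero.mp h2).resolve_right (hg0 0)
          have : c 0 = -∑ i : Fin k, w i * q i := by linear_combination h3
          rw [this, ← Finset.sum_neg_distrib]
          apply Finset.sum_congr rfl
          intro i _
          ring
      | succ i => rw [hmvs, ← hqc i]
    · rintro c ⟨q, rfl⟩
      rw [Matrix.mulVecLin_apply]
      show (Fintype.linearCombination (MvPolynomial (Fin n) K)) g (M₀.mulVec q) = 0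
      rw [hsum]
      have h1 : ∀ i : Fin k, M₀.mulVec q i.succ * g i.succ = w i * q i * g 0 := by
        intro i
        rw [hmvs]
        rw [show X (a i) * q i * g i.succ = q i * (X (a i) * g i.succ) by ring, hsyz i]
        ring
      rw [hmv0, Finset.sum_congr rfl (fun i _ => h1 i), Finset.sum_mul,
        ← Finset.sum_add_distrib]
      apply Finset.sum_eq_zero
      intro i _
      ring
  · -- exactness at later spots
    intro j
    match j with
    | 0 =>
        show LinearMap.ker M₀.mulVecLin = LinearMap.range (0 : Matrix (Fin k) (Fin 0) (MvPolynomial (Fin n) K)).mulVecLin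
        rw [Matrix.mulVecLin_zero, LinearMap.range_zero]
        rw [LinearMap.ker_eq_bot']
        intro q hq
        funext i
        have h := congrFun hq i.succ
        rw [Matrix.mulVecLin_apply, hmvs] at h
        have h2 := (mul_eq_zero.mp h).resolve_left (MvPolynomial.X_ne_zero (a i))
        simpa using h2
    | (j + 1) =>
        have hsub : Subsingleton (Fin (rk (j + 2)) → MvPolynomial (Fin n) K) :=
          ⟨fun a b => funext fun i => i.elim0⟩
        apply Submodule.ext
        intro x
        haveI := hsub
        have hx : x = 0 := Subsingleton.elim x 0
        subst hx
        simp
  · intro j hj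
    obtain ⟨j', rfl⟩ : ∃ j', j = j' + 2 := ⟨j - 2, by omega⟩
    rfl

end Abstract
/-- For the graph `H` (complete graph on `A`, `|A| = m < n`, with stars centered at the
vertices of `A`, the leaves being exactly the vertices outside `A`), the projective
dimension of `R/I_c(H)` equals `2`: the minimal graded free resolution
`⋯ → F₂ → F₁ → R → R/I_c(H) → 0` has `F_j = 0` for `j > 2` and `F₂ ≠ 0`
(recall `F_{j+1}` has rank `rk j`). -/
theorem projdim_quotient_coverIdeal
    (n m : ℕ) (hmn : m < n) (K : Type*) [Field K]
    (A : Finset (Fin n)) (hA : A.card = m)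
    (f : Fin n → Fin n) (hf : ∀ v : Fin n, v ∉ A → f v ∈ A)
    (H : SimpleGraph (Fin n))
    (hH : ∀ u v : Fin n, H.Adj u v ↔
      (u ∈ A ∧ v ∈ A ∧ u ≠ v) ∨ (u ∉ A ∧ v = f u) ∨ (v ∉ A ∧ u = f v)) :
    ∃ (rk : ℕ → ℕ) (dgr : ∀ j : ℕ, Fin (rk j) → ℕ)
      (g : Fin (rk 0) → MvPolynomial (Fin n) K)
      (M : ∀ j : ℕ, Matrix (Fin (rk j)) (Fin (rk (j + 1))) (MvPolynomial (Fin n) K)),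
      IsMinimalGradedFreeResolution (coverIdeal K H) rk dgr g M ∧
      (∀ j : ℕ, 2 ≤ j → rk j = 0) ∧ rk 1 ≠ 0 := by
  classical
  have hn0 : 0 < n := by omega
  have hm : 0 < m := by
    by_contra h
    have hA' : A = ∅ := Finset.card_eq_zero.mp (by omega)
    exact absurd (hf ⟨0, hn0⟩ (by simp [hA'])) (by simp [hA'])
  set L : Fin n → Finset (Fin n) :=
    fun a => Finset.univ.filter (fun v => v ∉ A ∧ f v = a) with hL
  have hmemL : ∀ {a v : Fin n}, v ∈ L a ↔ (v ∉ A ∧ f v = a) := by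
    intro a v; simp [hL]
  have hcover : ∀ C : Finset (Fin n), IsVertexCover H (↑C) ↔
      (A ⊆ C ∨ ∃ a ∈ A, A.erase a ⊆ C ∧ L a ⊆ C) := by
    intro C
    constructor
    · intro hC
      by_cases hAC : A ⊆ C
      · exact Or.inl hAC
      · obtain ⟨a, haA, haC⟩ := Finset.not_subset.mp hAC
        refine Or.inr ⟨a, haA, ?_, ?_⟩
        · intro a' ha'
          obtain ⟨hne, ha'A⟩ := Finset.mem_erase.mp ha'
          have hadj : H.Adj a a' := (hH a a').mpr (Or.inl ⟨haA, ha'A, Ne.symm hne⟩)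
          rcases hC hadj with h | h
          · exact absurd h haC
          · exact h
        · intro v hv
          obtain ⟨hvA, hfv⟩ := hmemL.mp hv
          have hadj : H.Adj v a := (hH v a).mpr (Or.inr (Or.inl ⟨hvA, hfv.symm⟩))
          rcases hC hadj with h | h
          · exact h
          · exact absurd h haC
    · intro h u v huv
      rcases (hH u v).mp huv with ⟨huA, hvA, hne⟩ | ⟨huA, hv⟩ | ⟨hvA, hu⟩
      · rcases h with hAC | ⟨a, haA, h1, h2⟩
        · exact Or.inl (hAC huA)
        · by_cases hua : u = a
          · subst hua
            exact Or.inr (h1 (Finset.mem_erase.mpr ⟨Ne.symm hne, hvA⟩))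
          · exact Or.inl (h1 (Finset.mem_erase.mpr ⟨hua, huA⟩))
      · subst hv
        rcases h with hAC | ⟨a, haA, h1, h2⟩
        · exact Or.inr (hAC (hf u huA))
        · by_cases hva : f u = a
          · exact Or.inl (h2 (hmemL.mpr ⟨huA, hva⟩))
          · exact Or.inr (h1 (Finset.mem_erase.mpr ⟨hva, hf u huA⟩))
      · subst hu
        rcases h with hAC | ⟨a, haA, h1, h2⟩
        · exact Or.inl (hAC (hf v hvA))
        · by_cases hva : f v = a
          · exact Or.inr (h2 (hmemL.mpr ⟨hvA, hva⟩))
          · exact Or.inl (h1 (Finset.mem_erase.mpr ⟨hva, hf v hvA⟩))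
  have hdvd_mem : ∀ (I : Ideal (MvPolynomial (Fin n) K)) (p q : MvPolynomial (Fin n) K),
      p ∈ I → p ∣ q → q ∈ I := by
    rintro I p q hp ⟨t, rfl⟩
    exact I.mul_mem_right t hp
  have hdisjL : ∀ (a : Fin n) (S : Finset (Fin n)), S ⊆ A → Disjoint S (L a) := by
    intro a S hS
    rw [Finset.disjoint_left]
    intro x hx hxl
    exact (hmemL.mp hxl).1 (hS hx)
  by_cases hB : ∀ b ∈ A, (L b).Nonempty
  · -- every center has a leaf
    set σ : Fin m → Fin n := fun i => ((A.orderIsoOfFin hA) i : Fin n) with hσ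
    have hσA : ∀ i, σ i ∈ A := fun i => ((A.orderIsoOfFin hA) i).2
    have hσinj : Function.Injective σ := fun i j h =>
      (A.orderIsoOfFin hA).injective (Subtype.ext h)
    have hσsurj : ∀ a ∈ A, ∃ i, σ i = a := by
      intro a ha
      obtain ⟨i, hi⟩ := (A.orderIsoOfFin hA).surjective ⟨a, ha⟩
      exact ⟨i, congrArg Subtype.val hi⟩
    set Gs : Fin (m + 1) → Finset (Fin n) :=
      Fin.cases A (fun i => A.erase (σ i) ∪ L (σ i)) with hGs
    have hGs0 : Gs 0 = A := rfl
    have hGss : ∀ i, Gs i.succ = A.erase (σ i) ∪ L (σ i) := fun i => by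
      simp [hGs]
    have hGcard : ∀ i, (Gs i.succ).card = (m - 1) + (L (σ i)).card := by
      intro i
      rw [hGss, Finset.card_union_of_disjoint
        (hdisjL (σ i) _ (Finset.erase_subset _ _)), Finset.card_erase_of_mem (hσA i), hA]
    have hσnm : ∀ i, σ i ∉ Gs i.succ := by
      intro i
      rw [hGss, Finset.mem_union]
      rintro (h | h)
      · exact Finset.notMem_erase _ _ h
      · exact (hmemL.mp h).1 (hσA i)
    apply abstract_resolution m (by omega) (coverIdeal K H)
      (fun j => ∏ v ∈ Gs j, X v) σ (fun i => ∏ v ∈ L (σ i), X v)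
      (fun j => (Gs j).card)
    · apply le_antisymm
      · rw [Ideal.span_le]
        rintro p ⟨j, rfl⟩
        apply Ideal.subset_span
        refine ⟨Gs j, ?_, rfl⟩
        rw [hcover]
        induction j using Fin.cases with
        | zero => exact Or.inl (hGs0 ▸ Finset.Subset.refl A)
        | succ i =>
            refine Or.inr ⟨σ i, hσA i, ?_, ?_⟩
            · rw [hGss]; exact Finset.subset_union_left
            · rw [hGss]; exact Finset.subset_union_right
      · rw [coverIdeal, Ideal.span_le]
        rintro p ⟨C, hC, rfl⟩
        rcases (hcover C).mp hC with hAC | ⟨a, ha, h1, h2⟩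
        · refine hdvd_mem _ _ _ (Ideal.subset_span (Set.mem_range_self 0)) ?_
          exact Finset.prod_dvd_prod_of_subset _ _ _ (hGs0 ▸ hAC)
        · obtain ⟨i, rfl⟩ := hσsurj a ha
          refine hdvd_mem _ _ _ (Ideal.subset_span (Set.mem_range_self i.succ)) ?_
          refine Finset.prod_dvd_prod_of_subset _ _ _ ?_
          rw [hGss]
          exact Finset.union_subset h1 h2
    · intro j; exact prodX_ne_zero _
    · intro j; exact prodX_homog _
    · intro j
      apply prodX_constantCoeff
      induction j using Fin.cases with
      | zero => exact hGs0 ▸ Finset.card_pos.mp (by omega)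
      | succ i =>
          rw [hGss]
          exact (hB _ (hσA i)).mono Finset.subset_union_right
    · intro i
      rw [hGss, hGs0,
        Finset.prod_union (hdisjL (σ i) _ (Finset.erase_subset _ _)), ← mul_assoc,
        Finset.mul_prod_erase A X (hσA i)]
      ring
    · intro i
      exact killX_prod_X (hσnm i)
    · intro i j hj
      induction j using Fin.cases with
      | zero =>
          rw [hGs0]
          exact Finset.dvd_prod_of_mem _ (hσA i)
      | succ i' =>
          have hne : i ≠ i' := by
            rintro rfl; exact hj rfl
          apply Finset.dvd_prod_of_mem
          rw [hGss, Finset.mem_union]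
          exact Or.inl (Finset.mem_erase.mpr ⟨hσinj.ne hne.symm ∘ Eq.symm, hσA i⟩)
    · intro i
      have h1 : 1 + (Gs i.succ).card - (Gs 0).card = (L (σ i)).card := by
        rw [hGcard, hGs0, hA]; omega
      rw [h1]
      exact prodX_homog _
    · intro i
      have h2 : 0 < (L (σ i)).card := Finset.card_pos.mpr (hB _ (hσA i))
      rw [hGcard, hGs0, hA]
      omega
  · -- some center b has no leaf
    push_neg at hB
    obtain ⟨b, hbA, hLbe⟩ := hB
    have hLb : L b = ∅ := hLbe
    have hm2 : 2 ≤ m := by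
      have hvex : ∃ v : Fin n, v ∉ A := by
        by_contra h
        push_neg at h
        have : A = Finset.univ := Finset.eq_univ_iff_forall.mpr h
        rw [this, Finset.card_univ, Fintype.card_fin] at hA
        omega
      obtain ⟨v, hv⟩ := hvex
      have hfvb : f v ≠ b := by
        rintro rfl
        have : v ∈ L (f v) := hmemL.mpr ⟨hv, rfl⟩
        rw [hLb] at this
        exact absurd this (Finset.notMem_empty v)
      have hsub : ({b, f v} : Finset (Fin n)) ⊆ A := by
        intro x hx
        rcases Finset.mem_insert.mp hx with rfl | hx
        · exact hbA
        · rw [Finset.mem_singleton.mp hx]; exact hf v hv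
      have := Finset.card_le_card hsub
      rw [Finset.card_insert_of_notMem (by simp [Ne.symm hfvb]), Finset.card_singleton,
        hA] at this
      omega
    have hcerase : (A.erase b).card = m - 1 := by
      rw [Finset.card_erase_of_mem hbA, hA]
    set τ : Fin (m - 1) → Fin n :=
      fun i => (((A.erase b).orderIsoOfFin hcerase) i : Fin n) with hτ
    have hτe : ∀ i, τ i ∈ A.erase b := fun i => (((A.erase b).orderIsoOfFin hcerase) i).2
    have hτA : ∀ i, τ i ∈ A := fun i => Finset.mem_of_mem_erase (hτe i)
    have hτinj : Function.Injective τ := fun i j h =>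
      ((A.erase b).orderIsoOfFin hcerase).injective (Subtype.ext h)
    have hτsurj : ∀ a ∈ A.erase b, ∃ i, τ i = a := by
      intro a ha
      obtain ⟨i, hi⟩ := ((A.erase b).orderIsoOfFin hcerase).surjective ⟨a, ha⟩
      exact ⟨i, congrArg Subtype.val hi⟩
    have hbL : ∀ a : Fin n, b ∉ L a := fun a h => (hmemL.mp h).1 hbA
    set Gs : Fin ((m - 1) + 1) → Finset (Fin n) :=
      Fin.cases (A.erase b) (fun i => A.erase (τ i) ∪ L (τ i)) with hGs
    have hGs0 : Gs 0 = A.erase b := rfl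
    have hGss : ∀ i, Gs i.succ = A.erase (τ i) ∪ L (τ i) := fun i => by
      simp [hGs]
    have hGcard : ∀ i, (Gs i.succ).card = (m - 1) + (L (τ i)).card := by
      intro i
      rw [hGss, Finset.card_union_of_disjoint
        (hdisjL (τ i) _ (Finset.erase_subset _ _)), Finset.card_erase_of_mem (hτA i), hA]
    have hτnm : ∀ i, τ i ∉ Gs i.succ := by
      intro i
      rw [hGss, Finset.mem_union]
      rintro (h | h)
      · exact Finset.notMem_erase _ _ h
      · exact (hmemL.mp h).1 (hτA i)
    apply abstract_resolution (m - 1) (by omega) (coverIdeal K H)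
      (fun j => ∏ v ∈ Gs j, X v) τ (fun i => ∏ v ∈ insert b (L (τ i)), X v)
      (fun j => (Gs j).card)
    · apply le_antisymm
      · rw [Ideal.span_le]
        rintro p ⟨j, rfl⟩
        apply Ideal.subset_span
        refine ⟨Gs j, ?_, rfl⟩
        rw [hcover]
        induction j using Fin.cases with
        | zero =>
            refine Or.inr ⟨b, hbA, hGs0 ▸ Finset.Subset.refl _, ?_⟩
            rw [hLb]
            exact Finset.empty_subset _
        | succ i =>
            refine Or.inr ⟨τ i, hτA i, ?_, ?_⟩
            · rw [hGss]; exact Finset.subset_union_left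
            · rw [hGss]; exact Finset.subset_union_right
      · rw [coverIdeal, Ideal.span_le]
        rintro p ⟨C, hC, rfl⟩
        rcases (hcover C).mp hC with hAC | ⟨a, ha, h1, h2⟩
        · refine hdvd_mem _ _ _ (Ideal.subset_span (Set.mem_range_self 0)) ?_
          refine Finset.prod_dvd_prod_of_subset _ _ _ ?_
          rw [hGs0]
          exact (Finset.erase_subset _ _).trans hAC
        · by_cases hab : a = b
          · subst hab
            refine hdvd_mem _ _ _ (Ideal.subset_span (Set.mem_range_self 0)) ?_
            exact Finset.prod_dvd_prod_of_subset _ _ _ (hGs0 ▸ h1)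
          · obtain ⟨i, rfl⟩ := hτsurj a (Finset.mem_erase.mpr ⟨hab, ha⟩)
            refine hdvd_mem _ _ _ (Ideal.subset_span (Set.mem_range_self i.succ)) ?_
            refine Finset.prod_dvd_prod_of_subset _ _ _ ?_
            rw [hGss]
            exact Finset.union_subset h1 h2
    · intro j; exact prodX_ne_zero _
    · intro j; exact prodX_homog _
    · intro j
      apply prodX_constantCoeff
      induction j using Fin.cases with
      | zero =>
          rw [hGs0]
          exact Finset.card_pos.mp (by rw [hcerase]; omega)
      | succ i =>
          rw [hGss]
          refine Finset.Nonempty.mono Finset.subset_union_left ?_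
          exact Finset.card_pos.mp (by rw [Finset.card_erase_of_mem (hτA i), hA]; omega)
    · intro i
      rw [hGss, hGs0,
        Finset.prod_union (hdisjL (τ i) _ (Finset.erase_subset _ _)),
        Finset.prod_insert (hbL (τ i)), ← mul_assoc,
        Finset.mul_prod_erase A X (hτA i)]
      rw [show X b * (∏ v ∈ L (τ i), X v) * ∏ v ∈ A.erase b, X v
          = (X b * ∏ v ∈ A.erase b, X v) * ∏ v ∈ L (τ i), X v by ring,
        Finset.mul_prod_erase A X hbA]
    · intro i
      exact killX_prod_X (hτnm i)
    · intro i j hj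
      induction j using Fin.cases with
      | zero =>
          rw [hGs0]
          exact Finset.dvd_prod_of_mem _ (hτe i)
      | succ i' =>
          have hne : i ≠ i' := by
            rintro rfl; exact hj rfl
          apply Finset.dvd_prod_of_mem
          rw [hGss, Finset.mem_union]
          exact Or.inl (Finset.mem_erase.mpr ⟨hτinj.ne hne.symm ∘ Eq.symm, hτA i⟩)
    · intro i
      have h1 : 1 + (Gs i.succ).card - (Gs 0).card = (insert b (L (τ i))).card := by
        rw [Finset.card_insert_of_notMem (hbL (τ i)), hGcard, hGs0, hcerase]
        omega
      rw [h1]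
      exact prodX_homog _
    · intro i
      rw [hGcard, hGs0, hcerase]
      omega
end

section
/- Let H be the connected graph on n vertices that is the union of a complete graph K_m on vertices v_{α_1},…,v_{α_m} (m < n) and star graphs centered at vertices of K_m, each star meeting K_m only in its center, distinct stars being otherwise vertex-disjoint, and the leaves of the stars being exactly the n − m vertices outside K_m. Then the Castelnuovo–Mumford regularity of R/I_c(H) equals max_{1≤i≤m} deg_H(v_{α_i}) − 1, where deg_H(v_{α_i}) is the degree in H of the K_m-vertex v_{α_i}. -/
open MvPolynomial Finset

noncomputable section Helpers
variable {n : ℕ} {K : Type*} [Field K]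

/-- substitute `X a ↦ 0`. -/
def phiA (a : Fin n) : MvPolynomial (Fin n) K →ₐ[K] MvPolynomial (Fin n) K :=
  aeval (fun v => if v = a then 0 else X v)

lemma phiA_X_self (a : Fin n) : phiA (K := K) a (X a) = 0 := by
  simp [phiA]

lemma phiA_fix {a : Fin n} {p : MvPolynomial (Fin n) K}
    (h : ∀ d ∈ p.support, d a = 0) : phiA a p = p := by
  have h1 : phiA (K := K) a p = ∑ d ∈ p.support, phiA (K := K) a (monomial d (coeff d p)) := by
    rw [← map_sum]; exact congrArg _ p.as_sum
  rw [h1]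
  conv_rhs => rw [p.as_sum]
  refine Finset.sum_congr rfl fun d hd => ?_
  rw [phiA, aeval_monomial, monomial_eq, algebraMap_eq]
  congr 1
  refine Finsupp.prod_congr fun v hv => ?_
  have hva : v ≠ a := by
    rintro rfl
    rw [Finsupp.mem_support_iff] at hv
    exact hv (h d hd)
  simp [hva]

lemma X_dvd_iff_phiA (a : Fin n) (p : MvPolynomial (Fin n) K) :
    X a ∣ p ↔ phiA a p = 0 := by
  constructor
  · rintro ⟨q, rfl⟩
    rw [map_mul, phiA_X_self, zero_mul]
  · intro hp
    have hsplit := divMonomial_add_modMonomial_single p a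
    have hmod : ∀ d ∈ (p.modMonomial (Finsupp.single a 1)).support, d a = 0 := by
      intro d hd
      by_contra hda
      have : Finsupp.single a 1 ≤ d := by
        intro v; rcases eq_or_ne v a with rfl | hv
        · simpa [Finsupp.single_apply] using Nat.one_le_iff_ne_zero.2 hda
        · simp [Finsupp.single_apply, hv.symm]
      rw [MvPolynomial.mem_support_iff] at hd
      exact hd (coeff_modMonomial_of_le p this)
    have h2 : phiA (K := K) a p = p.modMonomial (Finsupp.single a 1) := by
      conv_lhs => rw [← hsplit]
      rw [map_add, map_mul, phiA_X_self, zero_mul, zero_add, phiA_fix hmod]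
    rw [X_dvd_iff_modMonomial_eq_zero, ← h2, hp]

lemma phiA_prod {a : Fin n} {t : Finset (Fin n)} (ha : a ∉ t) :
    phiA (K := K) a (∏ v ∈ t, X v) = ∏ v ∈ t, X v := by
  rw [map_prod]
  refine Finset.prod_congr rfl fun v hv => ?_
  have hva : v ≠ a := fun h => ha (h ▸ hv)
  simp [phiA, hva]

lemma prod_X_ne_zero (t : Finset (Fin n)) : (∏ v ∈ t, X v : MvPolynomial (Fin n) K) ≠ 0 :=
  Finset.prod_ne_zero_iff.2 fun v _ => X_ne_zero v

lemma X_dvd_of_dvd_mul {a : Fin n} {t : Finset (Fin n)} (ha : a ∉ t)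
    {w : MvPolynomial (Fin n) K} (h : X a ∣ w * ∏ v ∈ t, X v) : X a ∣ w := by
  rw [X_dvd_iff_phiA] at h ⊢
  rw [map_mul, phiA_prod ha] at h
  exact (mul_eq_zero.1 h).resolve_right (prod_X_ne_zero t)

lemma isHom_prod (t : Finset (Fin n)) :
    (∏ v ∈ t, X v : MvPolynomial (Fin n) K).IsHomogeneous t.card := by
  have := MvPolynomial.IsHomogeneous.prod t (fun v => (X v : MvPolynomial (Fin n) K))
    (fun _ => 1) (fun v _ => isHomogeneous_X K v)
  simpa using this

lemma constantCoeff_prod_X {t : Finset (Fin n)} (ht : t.Nonempty) :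
    constantCoeff (∏ v ∈ t, X v : MvPolynomial (Fin n) K) = 0 := by
  obtain ⟨v, hv⟩ := ht
  rw [← Finset.mul_prod_erase t _ hv, map_mul]
  simp

end Helpers

noncomputable section ResDefs
variable {n : ℕ} {K : Type*} [Field K]

@[reducible] def resRk (c : ℕ) : ℕ → ℕ
  | 0 => c + 1
  | 1 => c
  | _ + 2 => 0

@[reducible] def resDgr (c mm : ℕ) (ℓ : Fin c → ℕ) : ∀ j : ℕ, Fin (resRk c j) → ℕ
  | 0 => Fin.cases c (fun i => mm - 1 + ℓ i)
  | 1 => fun i => mm + ℓ i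
  | _ + 2 => fun _ => 0

@[reducible] def resG (c : ℕ) (g0 : MvPolynomial (Fin n) K) (gs : Fin c → MvPolynomial (Fin n) K) :
    Fin (resRk c 0) → MvPolynomial (Fin n) K :=
  Fin.cases g0 gs

@[reducible] def resM0 (c : ℕ) (yB xx : Fin c → MvPolynomial (Fin n) K) :
    Matrix (Fin (c + 1)) (Fin c) (MvPolynomial (Fin n) K) :=
  fun k i => Fin.cases (-(yB i)) (fun j' => if j' = i then xx i else 0) k

@[reducible] def resM (c : ℕ) (yB xx : Fin c → MvPolynomial (Fin n) K) :
    ∀ j : ℕ, Matrix (Fin (resRk c j)) (Fin (resRk c (j + 1))) (MvPolynomial (Fin n) K)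
  | 0 => resM0 c yB xx
  | _ + 1 => 0

end ResDefs

theorem main_lemma (n m : ℕ) (K : Type*) [Field K]
    (A B : Finset (Fin n)) (L : Fin n → Finset (Fin n)) (H : SimpleGraph (Fin n))
    (hA : A.card = m) (hm : 1 ≤ m) (hBA : B ⊆ A) (hB1 : B.card ≤ 1)
    (hABne : (A \ B).Nonempty)
    (hBL : ∀ b ∈ B, L b = ∅) (hBe : B = ∅ → ∀ a ∈ A, (L a).Nonempty)
    (hLA : ∀ a v, v ∈ L a → v ∉ A) (hLsupp : ∀ a, a ∉ A → L a = ∅)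
    (hex : ∃ a ∈ A, (L a).Nonempty)
    (hHL : ∀ u v, H.Adj u v ↔ (u ∈ A ∧ v ∈ A ∧ u ≠ v) ∨ u ∈ L v ∨ v ∈ L u) :
    ∃ (rk : ℕ → ℕ) (dgr : ∀ j : ℕ, Fin (rk j) → ℕ)
      (g : Fin (rk 0) → MvPolynomial (Fin n) K)
      (M : ∀ j : ℕ, Matrix (Fin (rk j)) (Fin (rk (j + 1))) (MvPolynomial (Fin n) K)),
      IsMinimalGradedFreeResolution (coverIdeal K H) rk dgr g M ∧
      (∃ p : ℕ, ∀ j : ℕ, p ≤ j → rk j = 0) ∧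
      (∀ (j : ℕ) (i : Fin (rk j)),
        dgr j i ≤ (j + 1) + (A.sup (fun a => Set.ncard {w : Fin n | H.Adj a w}) - 1)) ∧
      (A.sup (fun a => Set.ncard {w : Fin n | H.Adj a w}) - 1 = 0 ∨
        ∃ (j : ℕ) (i : Fin (rk j)),
          dgr j i = (j + 1) + (A.sup (fun a => Set.ncard {w : Fin n | H.Adj a w}) - 1)) := by
  classical
  -- notation
  set c := (A \ B).card with hc
  set e : Fin c → Fin n := fun i => ((A \ B).equivFin.symm i : Fin n) with he_def
  have he : ∀ i, e i ∈ A \ B := fun i => ((A \ B).equivFin.symm i).2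
  have heA : ∀ i, e i ∈ A := fun i => (Finset.mem_sdiff.1 (he i)).1
  have heB : ∀ i, e i ∉ B := fun i => (Finset.mem_sdiff.1 (he i)).2
  have heinj : Function.Injective e := fun i j h => by
    have := (A \ B).equivFin.symm.injective (Subtype.ext h)
    exact this
  have hesurj : ∀ a, a ∈ A \ B → ∃ i, e i = a := fun a ha =>
    ⟨(A \ B).equivFin ⟨a, ha⟩, by simp [he_def]⟩
  set s : Fin n → Finset (Fin n) := fun a => A.erase a ∪ L a with hs_def
  have hdisj : ∀ a, Disjoint (A.erase a) (L a) := by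
    intro a
    refine Finset.disjoint_left.2 fun v hv hvL => ?_
    exact hLA a v hvL (Finset.mem_of_mem_erase hv)
  have hcm : c + B.card = m := by
    rw [hc, Finset.card_sdiff_add_card_eq_card hBA, hA]
  have hcard_s : ∀ a ∈ A, (s a).card = m - 1 + (L a).card := by
    intro a ha
    rw [hs_def]
    rw [Finset.card_union_of_disjoint (hdisj a), Finset.card_erase_of_mem ha, hA]
  have has : ∀ a ∈ A, a ∉ s a := by
    intro a ha hmem
    rcases Finset.mem_union.1 hmem with h | h
    · exact (Finset.mem_erase.1 h).1 rfl
    · exact hLA a a h ha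
  set g0 : MvPolynomial (Fin n) K := ∏ v ∈ A \ B, X v with hg0
  set gs : Fin c → MvPolynomial (Fin n) K := fun i => ∏ v ∈ s (e i), X v with hgs
  set yB : Fin c → MvPolynomial (Fin n) K :=
    fun i => (∏ v ∈ B, X v) * ∏ v ∈ L (e i), X v with hyB
  set xx : Fin c → MvPolynomial (Fin n) K := fun i => X (e i) with hxx
  set ℓ : Fin c → ℕ := fun i => (L (e i)).card with hℓ
  -- key syzygy identity
  have key : ∀ i : Fin c, xx i * gs i = yB i * g0 := by
    intro i
    show X (e i) * ∏ v ∈ A.erase (e i) ∪ L (e i), X v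
      = ((∏ v ∈ B, X v) * ∏ v ∈ L (e i), X v) * ∏ v ∈ A \ B, X v
    rw [Finset.prod_union (hdisj (e i)), ← mul_assoc,
      Finset.mul_prod_erase A _ (heA i), ← Finset.prod_sdiff hBA]
    ring
  -- ℓmax facts
  set ℓmax := A.sup (fun a => (L a).card) with hℓmax
  have hℓmax1 : 1 ≤ ℓmax := by
    obtain ⟨a, ha, hne⟩ := hex
    exact le_trans (Finset.card_pos.2 hne) (Finset.le_sup (f := fun a => (L a).card) ha)
  have hℓle : ∀ i, ℓ i ≤ ℓmax := fun i => Finset.le_sup (f := fun a => (L a).card) (heA i)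
  have hAne : A.Nonempty := by
    obtain ⟨a', ha'⟩ := hABne
    exact ⟨a', (Finset.mem_sdiff.1 ha').1⟩
  have hdeg : ∀ a ∈ A, Set.ncard {w : Fin n | H.Adj a w} = m - 1 + (L a).card := by
    intro a ha
    have hset : {w : Fin n | H.Adj a w} = ↑(s a) := by
      ext w
      simp only [Set.mem_setOf_eq, hHL, hs_def, Finset.coe_union, Set.mem_union,
        Finset.mem_coe, Finset.mem_erase]
      constructor
      · rintro (⟨_, hwA, hne⟩ | haw | hwa)
        · exact Or.inl ⟨Ne.symm hne, hwA⟩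
        · exact absurd ha (hLA w a haw)
        · exact Or.inr hwa
      · rintro (⟨hne, hwA⟩ | hw)
        · exact Or.inl ⟨ha, hwA, Ne.symm hne⟩
        · exact Or.inr (Or.inr hw)
    rw [hset, Set.ncard_coe_finset, hcard_s a ha]
  have hD : A.sup (fun a => Set.ncard {w : Fin n | H.Adj a w}) = m - 1 + ℓmax := by
    apply le_antisymm
    · refine Finset.sup_le fun a ha => ?_
      rw [hdeg a ha]
      exact Nat.add_le_add_left (Finset.le_sup (f := fun a => (L a).card) ha) _
    · obtain ⟨a₀, ha₀A, ha₀⟩ := Finset.exists_mem_eq_sup A hAne (fun a => (L a).card)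
      calc m - 1 + ℓmax = Set.ncard {w : Fin n | H.Adj a₀ w} := by
            rw [hdeg a₀ ha₀A, hℓmax, ha₀]
        _ ≤ _ := Finset.le_sup (f := fun a => Set.ncard {w : Fin n | H.Adj a w}) ha₀A
  refine ⟨resRk c, resDgr c m ℓ, resG c g0 gs, resM c yB xx,
    ⟨?_, ?_, ?_, ?_, ?_, ?_, ?_⟩, ⟨2, ?_⟩, ?_, ?_⟩
  · -- span = coverIdeal
    have hcoverAB : IsVertexCover H ↑(A \ B) := by
      intro u v huv
      rw [hHL] at huv
      rcases huv with ⟨huA, hvA, hne⟩ | huv | huv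
      · by_contra hcon
        push_neg at hcon
        obtain ⟨hu, hv⟩ := hcon
        have huB : u ∈ B := by
          by_contra h; exact hu (Finset.mem_coe.2 (Finset.mem_sdiff.2 ⟨huA, h⟩))
        have hvB : v ∈ B := by
          by_contra h; exact hv (Finset.mem_coe.2 (Finset.mem_sdiff.2 ⟨hvA, h⟩))
        exact hne (Finset.card_le_one.1 hB1 u huB v hvB)
      · right
        have hvA : v ∈ A := by
          by_contra h
          rw [hLsupp v h] at huv; exact absurd huv (Finset.notMem_empty u)
        have hvB : v ∉ B := fun h => by
          rw [hBL v h] at huv; exact absurd huv (Finset.notMem_empty u)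
        exact Finset.mem_coe.2 (Finset.mem_sdiff.2 ⟨hvA, hvB⟩)
      · left
        have huA : u ∈ A := by
          by_contra h
          rw [hLsupp u h] at huv; exact absurd huv (Finset.notMem_empty v)
        have huB : u ∉ B := fun h => by
          rw [hBL u h] at huv; exact absurd huv (Finset.notMem_empty v)
        exact Finset.mem_coe.2 (Finset.mem_sdiff.2 ⟨huA, huB⟩)
    have hcovers : ∀ i : Fin c, IsVertexCover H ↑(s (e i)) := by
      intro i u v huv
      rw [hHL] at huv
      rcases huv with ⟨huA, hvA, hne⟩ | huv | huv
      · rcases eq_or_ne u (e i) with rfl | hu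
        · exact Or.inr (Finset.mem_coe.2
            (Finset.mem_union_left _ (Finset.mem_erase.2 ⟨Ne.symm hne, hvA⟩)))
        · exact Or.inl (Finset.mem_coe.2
            (Finset.mem_union_left _ (Finset.mem_erase.2 ⟨hu, huA⟩)))
      · rcases eq_or_ne v (e i) with rfl | hv
        · exact Or.inl (Finset.mem_coe.2 (Finset.mem_union_right _ huv))
        · have hvA : v ∈ A := by
            by_contra h
            rw [hLsupp v h] at huv; exact absurd huv (Finset.notMem_empty u)
          exact Or.inr (Finset.mem_coe.2
            (Finset.mem_union_left _ (Finset.mem_erase.2 ⟨hv, hvA⟩)))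
      · rcases eq_or_ne u (e i) with rfl | hu
        · exact Or.inr (Finset.mem_coe.2 (Finset.mem_union_right _ huv))
        · have huA : u ∈ A := by
            by_contra h
            rw [hLsupp u h] at huv; exact absurd huv (Finset.notMem_empty v)
          exact Or.inl (Finset.mem_coe.2
            (Finset.mem_union_left _ (Finset.mem_erase.2 ⟨hu, huA⟩)))
    apply le_antisymm
    · rw [Ideal.span_le]
      rintro p ⟨k, rfl⟩
      rw [coverIdeal]
      apply Ideal.subset_span
      refine Fin.cases ?_ ?_ k
      · exact ⟨A \ B, hcoverAB, by simp only [resG, Fin.cases_zero, hg0]⟩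
      · intro i
        exact ⟨s (e i), hcovers i, by simp only [resG, Fin.cases_succ, hgs]⟩
    · rw [coverIdeal, Ideal.span_le]
      rintro p ⟨C, hC, rfl⟩
      have hdvd : ∃ k : Fin (c + 1), resG c g0 gs k ∣ ∏ i ∈ C, X i := by
        by_cases hAC : ∀ a ∈ A, a ∈ C
        · refine ⟨0, ?_⟩
          simp only [resG, Fin.cases_zero, hg0]
          exact Finset.prod_dvd_prod_of_subset _ _ _
            (fun x hx => hAC x (Finset.mem_sdiff.1 hx).1)
        · push_neg at hAC
          obtain ⟨a, haA, haC⟩ := hAC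
          have herase : A.erase a ⊆ C := by
            intro b hb
            obtain ⟨hba, hbA⟩ := Finset.mem_erase.1 hb
            have hadj : H.Adj a b := (hHL a b).2 (Or.inl ⟨haA, hbA, Ne.symm hba⟩)
            rcases hC hadj with h | h
            · exact absurd (Finset.mem_coe.1 h) haC
            · exact Finset.mem_coe.1 h
          have hLsub : L a ⊆ C := by
            intro v hv
            have hadj : H.Adj a v := (hHL a v).2 (Or.inr (Or.inr hv))
            rcases hC hadj with h | h
            · exact absurd (Finset.mem_coe.1 h) haC
            · exact Finset.mem_coe.1 h
          by_cases haB : a ∈ B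
          · refine ⟨0, ?_⟩
            simp only [resG, Fin.cases_zero, hg0]
            refine Finset.prod_dvd_prod_of_subset _ _ _ fun x hx => ?_
            obtain ⟨hxA, hxB⟩ := Finset.mem_sdiff.1 hx
            exact herase (Finset.mem_erase.2 ⟨fun h => hxB (h ▸ haB), hxA⟩)
          · obtain ⟨i, rfl⟩ := hesurj a (Finset.mem_sdiff.2 ⟨haA, haB⟩)
            refine ⟨i.succ, ?_⟩
            simp only [resG, Fin.cases_succ, hgs]
            refine Finset.prod_dvd_prod_of_subset _ _ _ ?_
            rw [hs_def]
            exact Finset.union_subset herase hLsub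
      obtain ⟨k, q, hq⟩ := hdvd
      rw [hq]
      exact Ideal.mul_mem_right _ _ (Ideal.subset_span ⟨k, rfl⟩)
  · -- homogeneity of g
    intro i
    refine Fin.cases ?_ ?_ i
    · simp only [resG, resDgr, Fin.cases_zero]
      exact isHom_prod _
    · intro i'
      simp only [resG, resDgr, Fin.cases_succ]
      have h1 := isHom_prod (K := K) (s (e i'))
      rwa [hcard_s _ (heA i')] at h1
  · -- constant coeff of g
    intro i
    refine Fin.cases ?_ ?_ i
    · simp only [resG, Fin.cases_zero]
      exact constantCoeff_prod_X hABne
    · intro i'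
      simp only [resG, Fin.cases_succ]
      apply constantCoeff_prod_X
      rcases Finset.eq_empty_or_nonempty B with hB | ⟨b, hb⟩
      · obtain ⟨v, hv⟩ := hBe hB (e i') (heA i')
        exact ⟨v, Finset.mem_union_right _ hv⟩
      · refine ⟨b, Finset.mem_union_left _ (Finset.mem_erase.2 ⟨?_, hBA hb⟩)⟩
        rintro rfl; exact heB i' hb
  · -- homogeneity of M entries
    rintro (_ | _ | j) k i
    · refine Fin.cases ?_ ?_ k
      · simp only [resM, resM0, resDgr, Fin.cases_zero]
        have hdeg' : m + ℓ i - c = B.card + ℓ i := by omega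
        rw [hdeg']
        exact MvPolynomial.IsHomogeneous.neg ((isHom_prod B).mul (isHom_prod (L (e i))))
      · intro k'
        simp only [resM, resM0, resDgr, Fin.cases_succ]
        by_cases hk : k' = i
        · subst hk
          rw [if_pos rfl]
          have hdeg' : m + ℓ k' - (m - 1 + ℓ k') = 1 := by omega
          rw [hdeg']
          exact isHomogeneous_X K _
        · rw [if_neg hk]
          exact isHomogeneous_zero _ _ _
    · exact i.elim0
    · exact k.elim0
  · -- minimality
    rintro (_ | _ | j) k i hle
    · revert hle
      refine Fin.cases ?_ ?_ k
      · intro hle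
        simp only [resDgr, Fin.cases_zero] at hle
        have h1 : 0 < B.card + ℓ i := by
          have hrfl : ℓ i = (L (e i)).card := rfl
          rcases Finset.eq_empty_or_nonempty B with hB | hB
          · have := Finset.card_pos.2 (hBe hB (e i) (heA i))
            omega
          · have := Finset.card_pos.2 hB
            omega
        exact absurd hle (by omega)
      · intro k' hle
        simp only [resM, resM0, Fin.cases_succ]
        by_cases hk : k' = i
        · subst hk
          simp only [resDgr, Fin.cases_succ] at hle
          exact absurd hle (by omega)
        · rw [if_neg hk]
    · exact i.elim0
    · exact k.elim0
  · -- exactness at F1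
    ext w
    simp only [LinearMap.mem_ker, Fintype.linearCombination_apply, smul_eq_mul,
      LinearMap.mem_range, Matrix.mulVecLin_apply]
    have hrow0 : ∀ v : Fin c → MvPolynomial (Fin n) K,
        (resM c yB xx 0).mulVec v 0 = ∑ i, -(yB i) * v i := by
      intro v
      simp [resM, resM0, Matrix.mulVec, dotProduct]
    have hrows : ∀ (v : Fin c → MvPolynomial (Fin n) K) (j' : Fin c),
        (resM c yB xx 0).mulVec v j'.succ = X (e j') * v j' := by
      intro v j'
      simp only [resM, resM0, Matrix.mulVec, dotProduct, Fin.cases_succ, ite_mul,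
        zero_mul]
      rw [Finset.sum_ite_eq]
      simp [hxx]
    constructor
    · intro hw
      have hXdvd : ∀ i : Fin c, X (e i) ∣ w i.succ := by
        intro i
        have h2 := Finset.sum_erase_add Finset.univ
          (fun k => w k * resG c g0 gs k) (Finset.mem_univ i.succ)
        rw [hw] at h2
        have hgsi : resG c g0 gs i.succ = gs i := by simp [resG]
        have hterm : w i.succ * gs i
            = -∑ k ∈ Finset.univ.erase i.succ, w k * resG c g0 gs k := by
          rw [← hgsi]
          exact eq_neg_of_add_eq_zero_right h2
        have hdvd2 : X (e i) ∣ w i.succ * gs i := by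
          rw [hterm, dvd_neg]
          refine Finset.dvd_sum fun k hk => ?_
          refine Dvd.dvd.mul_left ?_ (w k)
          revert hk
          refine Fin.cases ?_ ?_ k
          · intro _
            simp only [resG, Fin.cases_zero, hg0]
            exact Finset.dvd_prod_of_mem _ (he i)
          · intro k' hk'
            simp only [resG, Fin.cases_succ, hgs]
            have hki : k' ≠ i := by
              intro h
              exact (Finset.mem_erase.1 hk').1 (by rw [h])
            have hmem : e i ∈ s (e k') := by
              rw [hs_def]
              exact Finset.mem_union_left _
                (Finset.mem_erase.2 ⟨fun hh => hki (heinj hh).symm, heA i⟩)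
            exact Finset.dvd_prod_of_mem _ hmem
        exact X_dvd_of_dvd_mul (has (e i) (heA i)) hdvd2
      choose v hv using hXdvd
      refine ⟨v, ?_⟩
      funext k
      refine Fin.cases ?_ ?_ k
      · rw [hrow0 v]
        rw [Fin.sum_univ_succ] at hw
        simp only [resG, Fin.cases_zero, Fin.cases_succ] at hw
        have hsub : ∀ i : Fin c, w i.succ * gs i = (yB i * v i) * g0 := by
          intro i
          rw [hv i]
          calc X (e i) * v i * gs i = v i * (xx i * gs i) := by rw [hxx]; ring
            _ = v i * (yB i * g0) := by rw [key i]
            _ = (yB i * v i) * g0 := by ring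
        rw [Finset.sum_congr rfl (fun i _ => hsub i)] at hw
        have hfactor : (w 0 + ∑ i, yB i * v i) * g0 = 0 := by
          rw [add_mul, Finset.sum_mul]
          exact hw
        have hzero : w 0 + ∑ i, yB i * v i = 0 := by
          rcases mul_eq_zero.1 hfactor with h | h
          · exact h
          · exact absurd h (prod_X_ne_zero _)
        have hw0 : w 0 = -∑ i, yB i * v i := eq_neg_of_add_eq_zero_left hzero
        rw [hw0, ← Finset.sum_neg_distrib]
        exact Finset.sum_congr rfl fun i _ => by ring
      · intro j'
        rw [hrows v j', ← hv j']
    · rintro ⟨v, rfl⟩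
      rw [Fin.sum_univ_succ]
      simp only [resG, Fin.cases_zero, Fin.cases_succ]
      rw [hrow0 v]
      have hterm : ∀ j' : Fin c,
          (resM c yB xx 0).mulVec v j'.succ * gs j' = v j' * (yB j' * g0) := by
        intro j'
        rw [hrows v j']
        calc X (e j') * v j' * gs j' = v j' * (xx j' * gs j') := by rw [hxx]; ring
          _ = v j' * (yB j' * g0) := by rw [key j']
      rw [Finset.sum_congr rfl fun j' _ => hterm j']
      rw [Finset.sum_mul, ← Finset.sum_add_distrib]
      exact Finset.sum_eq_zero fun i _ => by ring
  · -- exactness later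
    rintro (_ | j)
    · apply le_antisymm
      · intro v hv
        rw [LinearMap.mem_ker, Matrix.mulVecLin_apply] at hv
        have hv0 : v = 0 := by
          funext i
          have h1 : (resM c yB xx 0).mulVec v i.succ = X (e i) * v i := by
            simp only [resM, resM0, Matrix.mulVec, dotProduct, Fin.cases_succ,
              ite_mul, zero_mul]
            rw [Finset.sum_ite_eq]
            simp [hxx]
          have h2 : X (e i) * v i = 0 := by
            rw [← h1, hv]; rfl
          rcases mul_eq_zero.1 h2 with h | h
          · exact absurd h (X_ne_zero _)
          · exact h
        rw [hv0]
        exact Submodule.zero_mem _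
      · rintro v ⟨u, rfl⟩
        rw [LinearMap.mem_ker]
        have hu : u = 0 := funext fun i => i.elim0
        rw [hu]
        simp
    · ext x
      have hx : x = 0 := funext fun i => i.elim0
      rw [hx]
      simp [Submodule.zero_mem]
  · -- finiteness
    intro j hj
    match j, hj with
    | (j + 2), _ => rfl
  · -- degree bound
    rw [hD]
    rintro (_ | _ | j) i
    · refine Fin.cases ?_ ?_ i
      · simp only [resDgr, Fin.cases_zero]
        omega
      · intro i'
        simp only [resDgr, Fin.cases_succ]
        have := hℓle i'
        omega
    · simp only [resDgr]
      have := hℓle i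
      omega
    · exact i.elim0
  · -- attainment
    right
    rw [hD]
    obtain ⟨a₀, ha₀A, ha₀⟩ := Finset.exists_mem_eq_sup A hAne (fun a => (L a).card)
    have ha₀B : a₀ ∉ B := by
      intro h
      have h0 : ℓmax = 0 := by rw [hℓmax, ha₀, hBL a₀ h, Finset.card_empty]
      omega
    obtain ⟨i₀, hi₀⟩ := hesurj a₀ (Finset.mem_sdiff.2 ⟨ha₀A, ha₀B⟩)
    refine ⟨1, i₀, ?_⟩
    simp only [resDgr]
    have hℓi₀ : ℓ i₀ = ℓmax := by
      rw [hℓ]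
      show (L (e i₀)).card = ℓmax
      rw [hi₀, hℓmax, ha₀]
    omega


/-- For the graph `H` (complete graph on `A`, `|A| = m < n`, with stars centered at the
vertices of `A`, the leaves being exactly the vertices outside `A`), the
Castelnuovo–Mumford regularity of `R/I_c(H)` equals `max_{a ∈ A} deg_H(a) - 1`:
in the (finite) minimal graded free resolution `⋯ → F₂ → F₁ → R → R/I_c(H) → 0`,
every generator of `F_{j+1}` has internal degree at most `(j + 1) + (max deg - 1)`,
and (unless the regularity is `0`, attained by `F₀ = R`) some generator attains the bound. -/
theorem regularity_quotient_coverIdeal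
    (n m : ℕ) (hmn : m < n) (K : Type*) [Field K]
    (A : Finset (Fin n)) (hA : A.card = m)
    (f : Fin n → Fin n) (hf : ∀ v : Fin n, v ∉ A → f v ∈ A)
    (H : SimpleGraph (Fin n))
    (hH : ∀ u v : Fin n, H.Adj u v ↔
      (u ∈ A ∧ v ∈ A ∧ u ≠ v) ∨ (u ∉ A ∧ v = f u) ∨ (v ∉ A ∧ u = f v)) :
    ∃ (rk : ℕ → ℕ) (dgr : ∀ j : ℕ, Fin (rk j) → ℕ)
      (g : Fin (rk 0) → MvPolynomial (Fin n) K)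
      (M : ∀ j : ℕ, Matrix (Fin (rk j)) (Fin (rk (j + 1))) (MvPolynomial (Fin n) K)),
      IsMinimalGradedFreeResolution (coverIdeal K H) rk dgr g M ∧
      (∃ p : ℕ, ∀ j : ℕ, p ≤ j → rk j = 0) ∧
      (∀ (j : ℕ) (i : Fin (rk j)),
        dgr j i ≤ (j + 1) + (A.sup (fun a => Set.ncard {w : Fin n | H.Adj a w}) - 1)) ∧
      (A.sup (fun a => Set.ncard {w : Fin n | H.Adj a w}) - 1 = 0 ∨
        ∃ (j : ℕ) (i : Fin (rk j)),
          dgr j i = (j + 1) + (A.sup (fun a => Set.ncard {w : Fin n | H.Adj a w}) - 1)) := by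
  classical
  set L : Fin n → Finset (Fin n) :=
    fun a => Finset.univ.filter (fun v => v ∉ A ∧ f v = a) with hL
  have hv₀ : ∃ v, v ∉ A := by
    by_contra h
    push_neg at h
    have hAu : A = Finset.univ := Finset.eq_univ_iff_forall.2 h
    rw [hAu, Finset.card_univ, Fintype.card_fin] at hA
    omega
  obtain ⟨v₀, hv₀⟩ := hv₀
  have hm : 1 ≤ m := by
    have h1 := hf v₀ hv₀
    have h2 : 0 < A.card := Finset.card_pos.2 ⟨f v₀, h1⟩
    omega
  have hLA : ∀ a v, v ∈ L a → v ∉ A := fun a v hv => (Finset.mem_filter.1 hv).2.1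
  have hLsupp : ∀ a, a ∉ A → L a = ∅ := by
    intro a ha
    ext v
    simp only [hL, Finset.mem_filter, Finset.mem_univ, true_and, Finset.notMem_empty,
      iff_false, not_and]
    intro hvA hfv
    exact ha (hfv ▸ hf v hvA)
  have hex : ∃ a ∈ A, (L a).Nonempty :=
    ⟨f v₀, hf v₀ hv₀, ⟨v₀, by simp [hL, hv₀]⟩⟩
  have hHL : ∀ u v, H.Adj u v ↔ (u ∈ A ∧ v ∈ A ∧ u ≠ v) ∨ u ∈ L v ∨ v ∈ L u := by
    intro u v
    rw [hH]
    simp only [hL, Finset.mem_filter, Finset.mem_univ, true_and]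
    constructor
    · rintro (h | ⟨h1, h2⟩ | ⟨h1, h2⟩)
      · exact Or.inl h
      · exact Or.inr (Or.inl ⟨h1, h2.symm⟩)
      · exact Or.inr (Or.inr ⟨h1, h2.symm⟩)
    · rintro (h | ⟨h1, h2⟩ | ⟨h1, h2⟩)
      · exact Or.inl h
      · exact Or.inr (Or.inl ⟨h1, h2.symm⟩)
      · exact Or.inr (Or.inr ⟨h1, h2.symm⟩)
  by_cases hS : ∃ a ∈ A, L a = ∅
  · obtain ⟨s₀, hs₀A, hs₀L⟩ := hS
    have hex2 := hex
    obtain ⟨a₁, ha₁A, ha₁⟩ := hex2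
    have hne : a₁ ≠ s₀ := by
      rintro rfl
      rw [hs₀L] at ha₁
      exact Finset.not_nonempty_empty ha₁
    exact main_lemma n m K A {s₀} L H hA hm (Finset.singleton_subset_iff.2 hs₀A)
      (by simp)
      ⟨a₁, Finset.mem_sdiff.2 ⟨ha₁A, by simp [hne]⟩⟩
      (fun b hb => by rw [Finset.mem_singleton.1 hb]; exact hs₀L)
      (fun h => absurd h (Finset.singleton_ne_empty s₀))
      hLA hLsupp hex hHL
  · push_neg at hS
    have hAne : A.Nonempty := ⟨f v₀, hf v₀ hv₀⟩
    exact main_lemma n m K A ∅ L H hA hm (Finset.empty_subset A)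
      (by simp)
      (by rw [Finset.sdiff_empty]; exact hAne)
      (fun b hb => absurd hb (Finset.notMem_empty b))
      (fun _ a ha => hS a ha)
      hLA hLsupp hex hHL
end

section
/- Let H be the connected graph on n vertices that is the union of a complete graph K_m (m < n) and star graphs centered at vertices of K_m, each star meeting K_m only in its center, distinct stars being otherwise vertex-disjoint, and the leaves of the stars being exactly the n − m vertices outside K_m. Then the complementary graph of H is chordal; that is, every cycle of length greater than 3 in the complement of H has a chord. -/
open SimpleGraph

private lemma walk_support_getElem? {V : Type*} {G : SimpleGraph V} :
    ∀ {u v : V} (w : G.Walk u v) (i : ℕ), i ≤ w.length →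
      w.support[i]? = some (w.getVert i) := by
  intro u v w
  induction w with
  | nil =>
    intro i hi
    have : i = 0 := by simpa using hi
    subst this
    simp
  | cons h p ih =>
    intro i hi
    cases i with
    | zero => simp
    | succ i =>
      simp only [Walk.support_cons, Walk.getVert_cons_succ, List.getElem?_cons_succ]
      exact ih i (by simpa using hi)

private lemma walk_getVert_injOn {V : Type*} {G : SimpleGraph V} {u : V}
    {w : G.Walk u u} (hw : w.support.tail.Nodup) {i j : ℕ}
    (hi1 : 1 ≤ i) (hiL : i ≤ w.length) (hj1 : 1 ≤ j) (hjL : j ≤ w.length)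
    (h : w.getVert i = w.getVert j) : i = j := by
  have hsupp : w.support = u :: w.support.tail := w.support_eq_cons
  have htlen : w.support.tail.length = w.length := by
    have := w.length_support
    rw [hsupp] at this
    simpa using this.symm
  have key : ∀ k : ℕ, 1 ≤ k → k ≤ w.length → w.support.tail[k - 1]? = some (w.getVert k) := by
    intro k hk1 hkL
    have := walk_support_getElem? w k hkL
    rw [hsupp] at this
    obtain ⟨k', rfl⟩ := Nat.exists_eq_add_of_le hk1
    rw [Nat.add_comm 1 k'] at this ⊢
    rw [List.getElem?_cons_succ] at this
    simpa using this
  have hgi := key i hi1 hiL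
  have hgj := key j hj1 hjL
  have : i - 1 = j - 1 := by
    refine (List.getElem?_inj (i := i - 1) (j := j - 1) (by omega) hw).mp ?_
    rw [hgi, hgj, h]
  omega

private lemma walk_mem_edges_idx {V : Type*} {G : SimpleGraph V} {x y : V} :
    ∀ {u v : V} (w : G.Walk u v), s(x, y) ∈ w.edges →
      ∃ i < w.length, s(w.getVert i, w.getVert (i + 1)) = s(x, y) := by
  intro u v w
  induction w with
  | nil => simp
  | cons h p ih =>
    intro hmem
    rw [Walk.edges_cons, List.mem_cons] at hmem
    rcases hmem with hmem | hmem
    · refine ⟨0, by simp, ?_⟩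
      rw [Walk.getVert_zero, Walk.getVert_cons_succ, Walk.getVert_zero]
      exact hmem.symm
    · obtain ⟨i, hi, heq⟩ := ih hmem
      exact ⟨i + 1, by simpa using hi, by simpa [Walk.getVert_cons_succ] using heq⟩

/-- Let `H` be the union of a complete graph on the vertex set `A` of cardinality `m`
(`m < n`) and star graphs centered at vertices of `A`, the leaves being exactly the
`n - m` vertices outside `A`.  Then the complement of `H` is chordal: every cycle of
length greater than `3` in `Hᶜ` has a chord, i.e. an edge of `Hᶜ` joining two vertices
of the cycle which is not an edge of the cycle. -/
theorem complement_chordal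
    (n m : ℕ) (hmn : m < n)
    (A : Finset (Fin n)) (hA : A.card = m)
    (f : Fin n → Fin n) (hf : ∀ v : Fin n, v ∉ A → f v ∈ A)
    (H : SimpleGraph (Fin n))
    (hH : ∀ u v : Fin n, H.Adj u v ↔
      (u ∈ A ∧ v ∈ A ∧ u ≠ v) ∨ (u ∉ A ∧ v = f u) ∨ (v ∉ A ∧ u = f v)) :
    ∀ (v : Fin n) (w : Hᶜ.Walk v v), w.IsCycle → 3 < w.length →
      ∃ x y : Fin n, x ∈ w.support ∧ y ∈ w.support ∧ Hᶜ.Adj x y ∧ s(x, y) ∉ w.edges := by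
  -- A is independent in Hᶜ
  have indep : ∀ a b : Fin n, a ∈ A → b ∈ A → ¬ Hᶜ.Adj a b := by
    intro a b ha hb hadj
    rw [compl_adj] at hadj
    exact hadj.2 ((hH a b).mpr (Or.inl ⟨ha, hb, hadj.1⟩))
  -- vertices outside A are pairwise adjacent in Hᶜ
  have outside : ∀ a b : Fin n, a ∉ A → b ∉ A → a ≠ b → Hᶜ.Adj a b := by
    intro a b ha hb hne
    rw [compl_adj]
    refine ⟨hne, fun hadj => ?_⟩
    rcases (hH a b).mp hadj with ⟨h1, _, _⟩ | ⟨h1, h2⟩ | ⟨h1, h2⟩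
    · exact ha h1
    · exact hb (h2 ▸ hf a ha)
    · exact ha (h2 ▸ hf b hb)
  intro v w hcyc hlen
  by_cases hex : ∃ a ∈ w.support, a ∈ A
  · -- Case A: some vertex of the cycle is in A; rotate the cycle to start there.
    obtain ⟨a, has, haA⟩ := hex
    set c : Hᶜ.Walk a a := w.rotate a has with hc_def
    have hc : c.IsCycle := hcyc.rotate has
    have hedgesperm : List.Perm c.edges w.edges := (w.rotate_edges a has).perm
    have hsuppperm : List.Perm c.support.tail w.support.tail := (w.support_rotate a has).perm
    have hL : c.length = w.length := by
      have := hedgesperm.length_eq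
      rwa [Walk.length_edges, Walk.length_edges] at this
    set L := c.length with hLdef
    have hL4 : 3 < L := hL ▸ hlen
    set x := c.getVert 1 with hx_def
    set y := c.getVert (L - 1) with hy_def
    have hax : Hᶜ.Adj a x := by
      have := c.adj_getVert_succ (i := 0) (by omega)
      simpa using this
    have hgL : c.getVert L = a := c.getVert_of_length_le (by omega)
    have hya : Hᶜ.Adj y a := by
      have := c.adj_getVert_succ (i := L - 1) (by omega)
      have h2 : L - 1 + 1 = L := by omega
      rw [h2, hgL] at this
      exact this
    have hxA : x ∉ A := fun hmem => indep a x haA hmem hax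
    have hyA : y ∉ A := fun hmem => indep y a hmem haA hya
    have hnd := hc.support_nodup
    have hxy : x ≠ y := by
      intro h
      have := walk_getVert_injOn hnd (i := 1) (j := L - 1)
        le_rfl (by omega) (by omega) (by omega) h
      omega
    have hadjxy : Hᶜ.Adj x y := outside x y hxA hyA hxy
    have hnotedge : s(x, y) ∉ c.edges := by
      intro hmem
      obtain ⟨i, hi, heq⟩ := walk_mem_edges_idx c hmem
      rw [Sym2.eq_iff] at heq
      rcases heq with ⟨h1, h2⟩ | ⟨h1, h2⟩
      · -- getVert i = x, getVert (i+1) = y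
        have hi1 : 1 ≤ i := by
          rcases Nat.eq_zero_or_pos i with h0 | h0
          · exfalso; apply hxA; rw [h0, Walk.getVert_zero] at h1; rwa [← h1]
          · exact h0
        have : i = 1 := walk_getVert_injOn hnd hi1 (by omega) le_rfl (by omega) h1
        subst this
        have : (2 : ℕ) = L - 1 := walk_getVert_injOn hnd (by omega) (by omega)
          (by omega) (by omega) h2
        omega
      · -- getVert i = y, getVert (i+1) = x
        have hi1 : 1 ≤ i := by
          rcases Nat.eq_zero_or_pos i with h0 | h0
          · exfalso; apply hyA; rw [h0, Walk.getVert_zero] at h1; rwa [← h1]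
          · exact h0
        have hiL : i = L - 1 := walk_getVert_injOn hnd hi1 (by omega) (by omega)
          (by omega) h1
        have : i + 1 = L := by omega
        rw [this, hgL] at h2
        exact hxA (h2 ▸ haA)
    -- transfer to w
    have hmemtransfer : ∀ z : Fin n, z ∉ A → z ∈ c.support → z ∈ w.support := by
      intro z hzA hzc
      rw [c.support_eq_cons, List.mem_cons] at hzc
      rcases hzc with rfl | hzc
      · exact absurd haA hzA
      · rw [w.support_eq_cons, List.mem_cons]
        exact Or.inr (hsuppperm.mem_iff.mp hzc)
    have hxc : x ∈ c.support := by
      rw [Walk.mem_support_iff_exists_getVert]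
      exact ⟨1, rfl, by omega⟩
    have hyc : y ∈ c.support := by
      rw [Walk.mem_support_iff_exists_getVert]
      exact ⟨L - 1, rfl, by omega⟩
    refine ⟨x, y, hmemtransfer x hxA hxc, hmemtransfer y hyA hyc, hadjxy, ?_⟩
    intro hmem
    exact hnotedge (hedgesperm.mem_iff.mpr hmem)
  · -- Case B: all vertices of the cycle are outside A.
    push_neg at hex
    set L := w.length with hLdef
    set y := w.getVert 2 with hy_def
    have hnd := hcyc.support_nodup
    have hvmem : v ∈ w.support := w.start_mem_support
    have hymem : y ∈ w.support := by
      rw [Walk.mem_support_iff_exists_getVert]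
      exact ⟨2, rfl, by omega⟩
    have hvA : v ∉ A := hex v hvmem
    have hyA : y ∉ A := hex y hymem
    have hvy : v ≠ y := by
      intro h
      have hL' : w.getVert L = w.getVert 2 := by
        rw [w.getVert_of_length_le (Nat.le_of_eq hLdef.symm)]
        exact h.trans hy_def
      have := walk_getVert_injOn hnd (i := L) (j := 2)
        (by omega) le_rfl (by omega) (by omega) hL'
      omega
    refine ⟨v, y, hvmem, hymem, outside v y hvA hyA hvy, ?_⟩
    intro hmem
    obtain ⟨i, hi, heq⟩ := walk_mem_edges_idx w hmem
    rw [Sym2.eq_iff] at heq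
    rcases heq with ⟨h1, h2⟩ | ⟨h1, h2⟩
    · -- getVert i = v, getVert (i+1) = y
      rcases Nat.eq_zero_or_pos i with h0 | h0
      · subst h0
        have : (1 : ℕ) = 2 := walk_getVert_injOn hnd (by omega) (by omega)
          (by omega) (by omega) h2
        omega
      · have hiv : w.getVert i = w.getVert L := by
          rw [h1, w.getVert_of_length_le (Nat.le_of_eq hLdef.symm)]
        have : i = L := walk_getVert_injOn hnd h0 (by omega) (by omega) le_rfl hiv
        omega
    · -- getVert i = y, getVert (i+1) = v
      rcases Nat.eq_zero_or_pos i with h0 | h0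
      · subst h0
        rw [Walk.getVert_zero] at h1
        exact hvy h1
      · have : i = 2 := walk_getVert_injOn hnd h0 (by omega) (by omega) (by omega) h1
        subst this
        have h3 : w.getVert 3 = w.getVert L := by
          rw [h2, w.getVert_of_length_le (Nat.le_of_eq hLdef.symm)]
        have : (3 : ℕ) = L := walk_getVert_injOn hnd (by omega) (by omega)
          (by omega) le_rfl h3
        omega
end
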